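/- Unification is complete and most general: if Δ ⊢ θ : Θ ⇒ Θ', A and B both have kind K under Δ,Θ, and θ(A) = θ(B), then unify(Δ, Θ, A, B) succeeds with some result (Θ'', θ'), and there exists θ'' with Δ ⊢ θ'' : Θ'' ⇒ Θ' such that θ = θ'' ∘ θ'. -/

import Mathlib

namespace FreezeML

/-! ### Types, kinds, environments -/

abbrev TVar := ℕ

inductive Kind
  | mono | poly
deriving DecidableEq

/-- System F types: type variables, fully applied constructors, universal types. -/
inductive Ty
  | tvar (a : TVar)
  | con (d : ℕ) (args : List Ty)
  | all (a : TVar) (body : Ty)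
deriving Inhabited

/-- Function types as a distinguished binary constructor. -/
def Ty.arrow (A B : Ty) : Ty := .con 0 [A, B]

/-- Refined kind environments: flexible variables with kinds. -/
abbrev KEnv := List (TVar × Kind)

/-- Type environments. -/
abbrev TEnv := List (ℕ × Ty)

/-- (Finite) type substitutions / instantiations, as association lists;
    identity outside the domain. -/
abbrev Subst := List (TVar × Ty)

/-- View a fixed kind environment (all variables monomorphic) as a refined one. -/
def dk (Δ : List TVar) : KEnv := Δ.map (fun a => (a, Kind.mono))

/-- Free type variables, in order of occurrence. -/
def Ty.ftv : Ty → List TVar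
  | .tvar a => [a]
  | .con _ args => (args.attach.map (fun x => x.1.ftv)).flatten
  | .all a A => A.ftv.filter (fun b => decide (b ≠ a))
  termination_by A => sizeOf A
  decreasing_by
    all_goals simp_wf
    all_goals try (have h := List.sizeOf_lt_of_mem x.2)
    all_goals omega

def lookupSub (θ : Subst) (a : TVar) : Ty :=
  match θ.find? (fun p => p.1 == a) with
  | some p => p.2
  | none => .tvar a

/-- Free type variables of (the range of) a substitution. -/
def ftvSubst (θ : Subst) : List TVar := (θ.map (fun p => p.2.ftv)).flatten

def freshFor (l : List TVar) : TVar := l.foldr max 0 + 1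

/-- Capture-avoiding application of a type substitution. -/
def Ty.applySubst : Ty → Subst → Ty
  | .tvar a, θ => lookupSub θ a
  | .con d args, θ => .con d (args.attach.map (fun x => x.1.applySubst θ))
  | .all a A, θ =>
      let c := freshFor (ftvSubst θ ++ A.ftv ++ [a])
      .all c (A.applySubst ((a, .tvar c) :: θ))
  termination_by A _ => sizeOf A
  decreasing_by
    all_goals simp_wf
    all_goals try (have h := List.sizeOf_lt_of_mem x.2)
    all_goals omega

/-- Composition of substitutions: `apply (comp θ θ') = apply θ ∘ apply θ'`. -/
def compSubst (θ θ' : Subst) : Subst :=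
  θ'.map (fun p => (p.1, p.2.applySubst θ)) ++ θ

def removeSub (θ : Subst) (a : TVar) : Subst := θ.filter (fun p => p.1 != a)

def substEnv (θ : Subst) (Γ : TEnv) : TEnv := Γ.map (fun p => (p.1, p.2.applySubst θ))

def envFtv (Γ : TEnv) : List TVar := (Γ.map (fun p => p.2.ftv)).flatten

def lookupEnv (Γ : TEnv) (x : ℕ) : Option Ty :=
  (Γ.find? (fun p => p.1 == x)).map (fun p => p.2)

/-- Prefix of top-level quantifiers and the guarded body of a type. -/
def Ty.splitAll : Ty → List TVar × Ty
  | .all a A => let p := A.splitAll; (a :: p.1, p.2)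
  | A => ([], A)

def mkAll (Δ : List TVar) (A : Ty) : Ty := Δ.foldr Ty.all A

/-- Syntactic monotypes (no quantifier anywhere). -/
def Ty.isMonoB : Ty → Bool
  | .tvar _ => true
  | .con _ args => args.attach.all (fun x => x.1.isMonoB)
  | .all _ _ => false
  termination_by A => sizeOf A
  decreasing_by
    all_goals simp_wf
    all_goals try (have h := List.sizeOf_lt_of_mem x.2)
    all_goals omega

/-- The list `l` minus the elements of `d`, deduplicated. -/
def listDiff (l d : List TVar) : List TVar :=
  (l.filter (fun a => decide (a ∉ d))).dedup

/-! ### Kinding -/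

/-- Kinding judgement `E ⊢ A : K` over a refined kind environment. -/
inductive HasKind : KEnv → Ty → Kind → Prop
  | var {E a K} : (a, K) ∈ E → HasKind E (.tvar a) K
  | con {E d args K} : (∀ A ∈ args, HasKind E A K) → HasKind E (.con d args) K
  | all {E a A} : HasKind ((a, Kind.mono) :: E) A .poly → HasKind E (.all a A) .poly
  | up {E A} : HasKind E A .mono → HasKind E A .poly

/-- Well-formedness of a substitution: `Δ ⊢ θ : Θ ⇒ Θ'`. -/
def SubstWF (Δ : List TVar) (θ : Subst) (Θ Θ' : KEnv) : Prop :=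
  (∀ p ∈ Θ, HasKind (dk Δ ++ Θ') (lookupSub θ p.1) p.2) ∧
  (∀ a ∈ Δ, lookupSub θ a = .tvar a)

/-- Type instantiation judgement `E ⊢ δ : Δ' ⇒_K Δ''`. -/
def InstWF (E : KEnv) (δ : Subst) (Δ' : List TVar) (K : Kind) (Δ'' : List TVar) : Prop :=
  (∀ a ∈ Δ', HasKind (E ++ dk Δ'') (lookupSub δ a) K) ∧
  (∀ p ∈ E, lookupSub δ p.1 = .tvar p.1)

/-- Well-formedness of a type environment: every type has kind ★ and
    all its free type variables are monomorphic. -/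
def EnvWF (E : KEnv) (Γ : TEnv) : Prop :=
  ∀ p ∈ Γ, HasKind E p.2 Kind.poly ∧ ∀ a ∈ p.2.ftv, (a, Kind.mono) ∈ E

/-! ### Alpha-equivalence -/

/-- Alpha-equivalence of types. -/
inductive Aeq : Ty → Ty → Prop
  | var (a : TVar) : Aeq (.tvar a) (.tvar a)
  | con {d args₁ args₂} : args₁.length = args₂.length →
      (∀ p ∈ args₁.zip args₂, Aeq p.1 p.2) → Aeq (.con d args₁) (.con d args₂)
  | all {a b A B} (c : TVar) : c ∉ A.ftv → c ∉ B.ftv →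
      Aeq (A.applySubst [(a, .tvar c)]) (B.applySubst [(b, .tvar c)]) →
      Aeq (.all a A) (.all b B)

/-! ### FreezeML terms -/

inductive Tm
  | var (x : ℕ)
  | freeze (x : ℕ)
  | lam (x : ℕ) (M : Tm)
  | alam (x : ℕ) (A : Ty) (M : Tm)
  | app (M N : Tm)
  | lett (x : ℕ) (M N : Tm)
  | alet (x : ℕ) (A : Ty) (M N : Tm)

/-- Values. -/
def Tm.isVal : Tm → Bool
  | .var _ => true
  | .freeze _ => true
  | .lam _ _ => true
  | .alam _ _ _ => true
  | .app _ _ => false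
  | .lett _ M N => M.isVal && N.isVal
  | .alet _ _ M N => M.isVal && N.isVal

/-- Guarded values. -/
def Tm.isGVal : Tm → Bool
  | .var _ => true
  | .freeze _ => false
  | .lam _ _ => true
  | .alam _ _ _ => true
  | .app _ _ => false
  | .lett _ M N => M.isVal && N.isGVal
  | .alet _ _ M N => M.isVal && N.isGVal

/-- `gen`: the generalisable type variables of `A` relative to `E`, paired as in the paper. -/
def genVars (E : KEnv) (A : Ty) (M : Tm) : List TVar × List TVar :=
  let Δ' := listDiff A.ftv (E.map Prod.fst)
  if M.isGVal then (Δ', Δ') else ([], Δ')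

/-- The `⇕` judgement: generalise guarded values, monomorphically instantiate non-values. -/
def Updown (E : KEnv) (Δ'' : List TVar) (M : Tm) (A' A : Ty) : Prop :=
  if M.isGVal then A = mkAll Δ'' A'
  else ∃ δ, InstWF E δ Δ'' Kind.mono [] ∧ A = A'.applySubst δ

/-- `split`: split a let-annotation depending on whether the bound term is a guarded value. -/
def splitTy (A : Ty) (M : Tm) : List TVar × Ty :=
  if M.isGVal then A.splitAll else ([], A)

/-! ### FreezeML typing (via the well-founded `J` function) -/

/-- Principality relative to a given typing set. -/
def PrincipalOn (X : Set (KEnv × TEnv × Ty)) (E : KEnv) (Γ : TEnv)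
    (Δ' : List TVar) (A' : Ty) : Prop :=
  Δ' = listDiff A'.ftv (E.map Prod.fst) ∧
  (E ++ dk Δ', Γ, A') ∈ X ∧
  ∀ Δ'' A'', Δ'' = listDiff A''.ftv (E.map Prod.fst) →
    (E ++ dk Δ'', Γ, A'') ∈ X →
    ∃ δ, InstWF E δ Δ' Kind.poly Δ'' ∧ A'.applySubst δ = A''

/-- The set of valid typing triples `(E, Γ, A)` of a term,
    defined by recursion on the term. -/
def TypingJ : Tm → Set (KEnv × TEnv × Ty)
  | .freeze x => {p | lookupEnv p.2.1 x = some p.2.2 ∧ EnvWF p.1 p.2.1 ∧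
      HasKind p.1 p.2.2 Kind.poly}
  | .var x => {p | ∃ A₀ δ, lookupEnv p.2.1 x = some A₀ ∧
      InstWF p.1 δ A₀.splitAll.1 Kind.poly [] ∧
      p.2.2 = A₀.splitAll.2.applySubst δ ∧
      EnvWF p.1 p.2.1 ∧ HasKind p.1 p.2.2 Kind.poly}
  | .lam x M => {p | ∃ S B, p.2.2 = Ty.arrow S B ∧ S.isMonoB ∧
      (p.1, (x, S) :: p.2.1, B) ∈ TypingJ M}
  | .alam x A M => {p | ∃ B, p.2.2 = Ty.arrow A B ∧
      (p.1, (x, A) :: p.2.1, B) ∈ TypingJ M}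
  | .app M N => {p | ∃ A, (p.1, p.2.1, Ty.arrow A p.2.2) ∈ TypingJ M ∧
      (p.1, p.2.1, A) ∈ TypingJ N}
  | .lett x M N => {p | ∃ A' A,
      Updown p.1 (listDiff A'.ftv (p.1.map Prod.fst)) M A' A ∧
      PrincipalOn (TypingJ M) p.1 p.2.1 (listDiff A'.ftv (p.1.map Prod.fst)) A' ∧
      (p.1, (x, A) :: p.2.1, p.2.2) ∈ TypingJ N}
  | .alet x A M N => {p |
      (p.1 ++ dk (splitTy A M).1, p.2.1, (splitTy A M).2) ∈ TypingJ M ∧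
      (p.1, (x, A) :: p.2.1, p.2.2) ∈ TypingJ N}

/-- The FreezeML typing relation. -/
def FzTyping (E : KEnv) (Γ : TEnv) (M : Tm) (A : Ty) : Prop :=
  (E, Γ, A) ∈ TypingJ M

/-- The principality predicate of the paper. -/
def Principal (E : KEnv) (Γ : TEnv) (M : Tm) (Δ' : List TVar) (A' : Ty) : Prop :=
  PrincipalOn (TypingJ M) E Γ Δ' A'

/-- Well-scopedness of terms: all annotations are well-kinded. -/
inductive TermWF : List TVar → Tm → Prop
  | var {Δ x} : TermWF Δ (.var x)
  | freeze {Δ x} : TermWF Δ (.freeze x)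
  | lam {Δ x M} : TermWF Δ M → TermWF Δ (.lam x M)
  | alam {Δ x A M} : HasKind (dk Δ) A Kind.poly → TermWF Δ M → TermWF Δ (.alam x A M)
  | app {Δ M N} : TermWF Δ M → TermWF Δ N → TermWF Δ (.app M N)
  | lett {Δ x M N} : TermWF Δ M → TermWF Δ N → TermWF Δ (.lett x M N)
  | alet {Δ x A M N} : HasKind (dk Δ) A Kind.poly →
      TermWF (Δ ++ (splitTy A M).1) M → TermWF Δ N → TermWF Δ (.alet x A M N)

/-! ### Demotion and unification -/

/-- Demote to kind • all variables of `Θ` occurring in `Δ'` (no-op for ★). -/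
def demote (K : Kind) (Θ : KEnv) (Δ' : List TVar) : KEnv :=
  match K with
  | .poly => Θ
  | .mono => Θ.map (fun p => if p.1 ∈ Δ' then (p.1, Kind.mono) else p)

/-- Remove a flexible variable from a refined kind environment, returning its kind. -/
def removeK : KEnv → TVar → Option (Kind × KEnv)
  | [], _ => none
  | p :: Θ, a =>
      if p.1 = a then some (p.2, Θ)
      else (removeK Θ a).map (fun q => (q.1, p :: q.2))

mutual
/-- Big-step relation of the unification algorithm:
    `UnifyRel Δ Θ A B Θ' θ` holds iff `unify(Δ, Θ, A, B)` succeeds with result `(Θ', θ)`. -/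
inductive UnifyRel : List TVar → KEnv → Ty → Ty → KEnv → Subst → Prop
  | refl {Δ Θ a} : UnifyRel Δ Θ (.tvar a) (.tvar a) Θ []
  | flexL {Δ Θ a A K Θ₀ Θ₁} : A ≠ .tvar a →
      removeK Θ a = some (K, Θ₀) →
      Θ₁ = demote K Θ₀ (listDiff A.ftv Δ) →
      HasKind (dk Δ ++ Θ₁) A K →
      UnifyRel Δ Θ (.tvar a) A Θ₁ [(a, A)]
  | flexR {Δ Θ a A K Θ₀ Θ₁} : A ≠ .tvar a →
      removeK Θ a = some (K, Θ₀) →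
      Θ₁ = demote K Θ₀ (listDiff A.ftv Δ) →
      HasKind (dk Δ ++ Θ₁) A K →
      UnifyRel Δ Θ A (.tvar a) Θ₁ [(a, A)]
  | con {Δ Θ d args₁ args₂ Θ' θ} :
      UnifyList Δ Θ args₁ args₂ Θ' θ →
      UnifyRel Δ Θ (.con d args₁) (.con d args₂) Θ' θ
  | all {Δ Θ a b A B Θ' θ} (c : TVar) :
      c ∉ Δ → c ∉ Θ.map Prod.fst →
      c ∉ (Ty.all a A).ftv → c ∉ (Ty.all b B).ftv →
      UnifyRel (c :: Δ) Θ (A.applySubst [(a, .tvar c)]) (B.applySubst [(b, .tvar c)]) Θ' θ →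
      c ∉ ftvSubst θ →
      UnifyRel Δ Θ (.all a A) (.all b B) Θ' θ

/-- Componentwise unification of argument lists, threading substitutions. -/
inductive UnifyList : List TVar → KEnv → List Ty → List Ty → KEnv → Subst → Prop
  | nil {Δ Θ} : UnifyList Δ Θ [] [] Θ []
  | cons {Δ Θ A B As Bs Θ₁ θ₁ Θ₂ θ₂} :
      UnifyRel Δ Θ A B Θ₁ θ₁ →
      UnifyList Δ Θ₁ (As.map (fun C => C.applySubst θ₁)) (Bs.map (fun C => C.applySubst θ₁)) Θ₂ θ₂ →
      UnifyList Δ Θ (A :: As) (B :: Bs) Θ₂ (compSubst θ₂ θ₁)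
end

/-! ### The type inference algorithm (as a big-step relation) -/

def removeVars (Θ : KEnv) (l : List TVar) : KEnv :=
  Θ.filter (fun p => !(l.contains p.1))

/-- Big-step relation of the inference algorithm:
    `InferRel Δ Θ Γ M Θ' θ A` holds iff `infer(Δ, Θ, Γ, M)` succeeds with `(Θ', θ, A)`. -/
inductive InferRel : List TVar → KEnv → TEnv → Tm → KEnv → Subst → Ty → Prop
  | freeze {Δ Θ Γ x A} : lookupEnv Γ x = some A →
      InferRel Δ Θ Γ (.freeze x) Θ [] A
  | var {Δ Θ Γ x A₀ as H} (bs : List TVar) :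
      lookupEnv Γ x = some A₀ → A₀.splitAll = (as, H) →
      bs.length = as.length → bs.Nodup →
      (∀ b ∈ bs, b ∉ Δ ∧ b ∉ Θ.map Prod.fst ∧ b ∉ A₀.ftv ∧ b ∉ envFtv Γ) →
      InferRel Δ Θ Γ (.var x) (Θ ++ bs.map (fun b => (b, Kind.poly))) []
        (H.applySubst (as.zip (bs.map Ty.tvar)))
  | lam {Δ Θ Γ x M Θ₁ θ₁ B S} (a : TVar) :
      a ∉ Δ → a ∉ Θ.map Prod.fst → a ∉ envFtv Γ →
      InferRel Δ (Θ ++ [(a, Kind.mono)]) ((x, .tvar a) :: Γ) M Θ₁ θ₁ B →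
      lookupSub θ₁ a = S → S.isMonoB →
      InferRel Δ Θ Γ (.lam x M) Θ₁ (removeSub θ₁ a) (Ty.arrow S B)
  | alam {Δ Θ Γ x A M Θ₁ θ B} :
      InferRel Δ Θ ((x, A) :: Γ) M Θ₁ θ B →
      InferRel Δ Θ Γ (.alam x A M) Θ₁ θ (Ty.arrow A B)
  | app {Δ Θ Γ M N Θ₁ θ₁ A' Θ₂ θ₂ A Θ₃ θ₃'} (b : TVar) :
      InferRel Δ Θ Γ M Θ₁ θ₁ A' →
      InferRel Δ Θ₁ (substEnv θ₁ Γ) N Θ₂ θ₂ A →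
      b ∉ Δ → b ∉ Θ₂.map Prod.fst → b ∉ (A'.applySubst θ₂).ftv → b ∉ A.ftv →
      UnifyRel Δ (Θ₂ ++ [(b, Kind.poly)]) (A'.applySubst θ₂) (Ty.arrow A (.tvar b)) Θ₃ θ₃' →
      InferRel Δ Θ Γ (.app M N) Θ₃
        (compSubst (removeSub θ₃' b) (compSubst θ₂ θ₁)) (lookupSub θ₃' b)
  | lett {Δ Θ Γ x M N Θ₁ θ₁ A Δ' Δ'' Δ''' Θ₁' Θ₂ θ₂ B} :
      InferRel Δ Θ Γ M Θ₁ θ₁ A →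
      Δ' = listDiff (ftvSubst θ₁) Δ →
      genVars (dk (Δ ++ Δ')) A M = (Δ'', Δ''') →
      Θ₁' = demote Kind.mono Θ₁ Δ''' →
      InferRel Δ (removeVars Θ₁' Δ'') ((x, mkAll Δ'' A) :: substEnv θ₁ Γ) N Θ₂ θ₂ B →
      InferRel Δ Θ Γ (.lett x M N) Θ₂ (compSubst θ₂ θ₁) B
  | alet {Δ Θ Γ x A M N Δ' A' Θ₁ θ₁ A₁ Θ₂ θ₂' θ₂ Θ₃ θ₃ B} :
      splitTy A M = (Δ', A') →
      InferRel (Δ ++ Δ') Θ Γ M Θ₁ θ₁ A₁ →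
      UnifyRel (Δ ++ Δ') Θ₁ A' A₁ Θ₂ θ₂' →
      θ₂ = compSubst θ₂' θ₁ →
      (∀ a ∈ ftvSubst θ₂, a ∉ Δ') →
      InferRel Δ Θ₂ ((x, A) :: substEnv θ₂ Γ) N Θ₃ θ₃ B →
      InferRel Δ Θ Γ (.alet x A M N) Θ₃ (compSubst θ₃ θ₂) B

/-! ### Call-by-value System F -/

inductive FTm
  | var (x : ℕ)
  | lam (x : ℕ) (A : Ty) (M : FTm)
  | app (M N : FTm)
  | tlam (a : TVar) (V : FTm)
  | tapp (M : FTm) (A : Ty)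

/-- Instantiations `I ::= x | I A`. -/
def FTm.isInst : FTm → Bool
  | .var _ => true
  | .tapp M _ => M.isInst
  | _ => false

/-- System F values. -/
def FTm.isVal : FTm → Bool
  | .var _ => true
  | .lam _ _ _ => true
  | .tlam _ _ => true
  | .tapp M _ => M.isInst
  | .app _ _ => false

/-- System F typing (call-by-value, with the value restriction on type abstraction). -/
inductive FTyping : List TVar → TEnv → FTm → Ty → Prop
  | var {Δ Γ x A} : lookupEnv Γ x = some A → FTyping Δ Γ (.var x) A
  | lam {Δ Γ x A M B} : FTyping Δ ((x, A) :: Γ) M B →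
      FTyping Δ Γ (.lam x A M) (Ty.arrow A B)
  | app {Δ Γ M N A B} : FTyping Δ Γ M (Ty.arrow A B) → FTyping Δ Γ N A →
      FTyping Δ Γ (.app M N) B
  | tlam {Δ Γ a V A} : V.isVal → FTyping (a :: Δ) Γ V A →
      FTyping Δ Γ (.tlam a V) (.all a A)
  | tapp {Δ Γ M a B A} : FTyping Δ Γ M (.all a B) → HasKind (dk Δ) A Kind.poly →
      FTyping Δ Γ (.tapp M A) (B.applySubst [(a, A)])

def mkTApp (M : FTm) (As : List Ty) : FTm := As.foldl FTm.tapp M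

def mkTLam (as : List TVar) (M : FTm) : FTm := as.foldr FTm.tlam M

/-! ### Translation from System F to FreezeML -/

/-- The derivation-directed translation `⟦-⟧` from System F to FreezeML.
    `N@` is sugar for `let y = N in y`. -/
inductive TransFtoFz : List TVar → TEnv → FTm → Ty → Tm → Prop
  | var {Δ Γ x A} : lookupEnv Γ x = some A →
      TransFtoFz Δ Γ (.var x) A (.freeze x)
  | lam {Δ Γ x A M B M'} : TransFtoFz Δ ((x, A) :: Γ) M B M' →
      TransFtoFz Δ Γ (.lam x A M) (Ty.arrow A B) (.alam x A M')
  | app {Δ Γ M N A B M' N'} : TransFtoFz Δ Γ M (Ty.arrow A B) M' →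
      TransFtoFz Δ Γ N A N' →
      TransFtoFz Δ Γ (.app M N) B (.app M' N')
  | tlam {Δ Γ a V B V'} (x y : ℕ) : x ∉ Γ.map Prod.fst → y ∉ Γ.map Prod.fst → x ≠ y →
      V.isVal → TransFtoFz (a :: Δ) Γ V B V' →
      TransFtoFz Δ Γ (.tlam a V) (.all a B)
        (.alet x (.all a B) (.lett y V' (.var y)) (.freeze x))
  | tapp {Δ Γ M a B A M'} (x y : ℕ) : x ∉ Γ.map Prod.fst → y ∉ Γ.map Prod.fst → x ≠ y →
      TransFtoFz Δ Γ M (.all a B) M' → HasKind (dk Δ) A Kind.poly →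
      TransFtoFz Δ Γ (.tapp M A) (B.applySubst [(a, A)])
        (.alet x (B.applySubst [(a, A)]) (.lett y M' (.var y)) (.freeze x))

/-! ### Translation from FreezeML to System F -/

/-- The derivation-directed translation from FreezeML to System F
    (the principality side condition is not used). -/
inductive TransFzToF : List TVar → TEnv → Tm → Ty → FTm → Prop
  | freeze {Δ Γ x A} : lookupEnv Γ x = some A →
      TransFzToF Δ Γ (.freeze x) A (.var x)
  | var {Δ Γ x A₀ as H δ} : lookupEnv Γ x = some A₀ → A₀.splitAll = (as, H) →
      InstWF (dk Δ) δ as Kind.poly [] →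
      TransFzToF Δ Γ (.var x) (H.applySubst δ) (mkTApp (.var x) (as.map (lookupSub δ)))
  | lam {Δ Γ x M S B M'} : S.isMonoB →
      TransFzToF Δ ((x, S) :: Γ) M B M' →
      TransFzToF Δ Γ (.lam x M) (Ty.arrow S B) (.lam x S M')
  | alam {Δ Γ x A M B M'} :
      TransFzToF Δ ((x, A) :: Γ) M B M' →
      TransFzToF Δ Γ (.alam x A M) (Ty.arrow A B) (.lam x A M')
  | app {Δ Γ M N A B M' N'} :
      TransFzToF Δ Γ M (Ty.arrow A B) M' → TransFzToF Δ Γ N A N' →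
      TransFzToF Δ Γ (.app M N) B (.app M' N')
  | lett {Δ Γ x M N A' A Δ' Δ'' B M' N'} :
      genVars (dk Δ) A' M = (Δ', Δ'') →
      Updown (dk Δ) Δ'' M A' A →
      TransFzToF (Δ ++ Δ'') Γ M A' M' →
      TransFzToF Δ ((x, A) :: Γ) N B N' →
      TransFzToF Δ Γ (.lett x M N) B (.app (.lam x A N') (mkTLam Δ' M'))
  | alet {Δ Γ x A M N Δ' A' B M' N'} :
      splitTy A M = (Δ', A') →
      TransFzToF (Δ ++ Δ') Γ M A' M' →
      TransFzToF Δ ((x, A) :: Γ) N B N' →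
      TransFzToF Δ Γ (.alet x A M N) B (.app (.lam x A N') (mkTLam Δ' M'))

/-! ### ML -/

/-- ML typing (monotypes, type schemes, value restriction on let-generalisation). -/
inductive MLTyping : List TVar → TEnv → Tm → Ty → Prop
  | var {Δ Γ x P as S δ} : lookupEnv Γ x = some P → P.splitAll = (as, S) →
      S.isMonoB → InstWF (dk Δ) δ as Kind.mono [] →
      MLTyping Δ Γ (.var x) (S.applySubst δ)
  | lam {Δ Γ x M S T} : S.isMonoB → MLTyping Δ ((x, S) :: Γ) M T →
      MLTyping Δ Γ (.lam x M) (Ty.arrow S T)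
  | app {Δ Γ M N S T} : MLTyping Δ Γ M (Ty.arrow S T) → MLTyping Δ Γ N S →
      MLTyping Δ Γ (.app M N) T
  | lett {Δ Γ x M N S T Δ'} :
      Δ' = (if M.isVal then listDiff S.ftv Δ else []) →
      MLTyping (Δ ++ Δ') Γ M S →
      MLTyping Δ ((x, mkAll Δ' S) :: Γ) N T →
      MLTyping Δ Γ (.lett x M N) T

/-- The derivation-directed translation from ML to System F. -/
inductive MLTrans : List TVar → TEnv → Tm → Ty → FTm → Prop
  | var {Δ Γ x P as S δ} : lookupEnv Γ x = some P → P.splitAll = (as, S) →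
      S.isMonoB → InstWF (dk Δ) δ as Kind.mono [] →
      MLTrans Δ Γ (.var x) (S.applySubst δ) (mkTApp (.var x) (as.map (lookupSub δ)))
  | lam {Δ Γ x M S T M'} : S.isMonoB → MLTrans Δ ((x, S) :: Γ) M T M' →
      MLTrans Δ Γ (.lam x M) (Ty.arrow S T) (.lam x S M')
  | app {Δ Γ M N S T M' N'} : MLTrans Δ Γ M (Ty.arrow S T) M' → MLTrans Δ Γ N S N' →
      MLTrans Δ Γ (.app M N) T (.app M' N')
  | lett {Δ Γ x M N S T Δ' M' N'} :
      Δ' = (if M.isVal then listDiff S.ftv Δ else []) →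
      MLTrans (Δ ++ Δ') Γ M S M' →
      MLTrans Δ ((x, mkAll Δ' S) :: Γ) N T N' →
      MLTrans Δ Γ (.lett x M N) T (.app (.lam x (mkAll Δ' S) N') (mkTLam Δ' M'))

/-- `K' ≤ K` on kinds. -/
def KindLe (K' K : Kind) : Prop := K' = Kind.mono ∨ K' = K

end FreezeML

namespace FreezeML


/-! ### Basic helpers -/

abbrev keysOf {α β : Type _} (l : List (α × β)) : List α := l.map Prod.fst

theorem le_foldr_max : ∀ {l : List TVar}, ∀ x ∈ l, x ≤ l.foldr max 0 := by
  intro l; induction l with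
  | nil => simp
  | cons b l ih =>
    intro x hx
    rcases List.mem_cons.1 hx with h | h
    · subst h; exact le_max_left _ _
    · exact le_trans (ih x h) (le_max_right _ _)

theorem freshFor_not_mem (l : List TVar) : freshFor l ∉ l := by
  intro h
  have := le_foldr_max _ h
  have h2 : freshFor l = l.foldr max 0 + 1 := rfl
  rw [h2] at this
  exact Nat.not_succ_le_self _ this

@[simp] theorem lookupSub_nil (a : TVar) : lookupSub [] a = .tvar a := rfl

theorem lookupSub_cons (p : TVar × Ty) (θ : Subst) (a : TVar) :
    lookupSub (p :: θ) a = if p.1 = a then p.2 else lookupSub θ a := by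
  unfold lookupSub
  rw [List.find?_cons]
  by_cases h : p.1 = a
  · simp [h]
  · have : (p.1 == a) = false := by simpa using h
    simp [this, h]

theorem lookupSub_not_mem {θ : Subst} {a : TVar} (h : a ∉ keysOf θ) :
    lookupSub θ a = .tvar a := by
  unfold lookupSub
  have : θ.find? (fun p => p.1 == a) = none := by
    apply List.find?_eq_none.2
    intro p hp
    simp only [beq_iff_eq]
    intro hpa
    exact h (List.mem_map.2 ⟨p, hp, hpa⟩)
  simp [this]

theorem lookupSub_mem {θ : Subst} {a : TVar} (h : a ∈ keysOf θ) :
    (a, lookupSub θ a) ∈ θ := by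
  induction θ with
  | nil => simp at h
  | cons p θ ih =>
    rw [lookupSub_cons]
    by_cases hpa : p.1 = a
    · simp only [if_pos hpa]
      subst hpa
      exact List.mem_cons_self
    · simp only [if_neg hpa]
      have : a ∈ keysOf θ := by
        rcases List.mem_map.1 h with ⟨q, hq, hqa⟩
        rcases List.mem_cons.1 hq with h1 | h1
        · exact absurd (h1 ▸ hqa) hpa
        · exact List.mem_map.2 ⟨q, h1, hqa⟩
      exact List.mem_cons_of_mem _ (ih this)

theorem mem_ftvSubst {θ : Subst} {x : TVar} :
    x ∈ ftvSubst θ ↔ ∃ p ∈ θ, x ∈ p.2.ftv := by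
  simp only [ftvSubst, List.mem_flatten, List.mem_map]
  constructor
  · rintro ⟨l, ⟨p, hp, rfl⟩, hx⟩
    exact ⟨p, hp, hx⟩
  · rintro ⟨p, hp, hx⟩
    exact ⟨p.2.ftv, ⟨p, hp, rfl⟩, hx⟩

theorem ftv_lookupSub_subset {θ : Subst} {a : TVar} (h : a ∈ keysOf θ) :
    ∀ x ∈ (lookupSub θ a).ftv, x ∈ ftvSubst θ := by
  intro x hx
  exact mem_ftvSubst.2 ⟨(a, lookupSub θ a), lookupSub_mem h, hx⟩

theorem lookup_compSubst (σ τ : Subst) (v : TVar) :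
    lookupSub (compSubst σ τ) v = (lookupSub τ v).applySubst σ := by
  induction τ with
  | nil =>
    show lookupSub σ v = (Ty.tvar v).applySubst σ
    rw [Ty.applySubst]
  | cons p τ ih =>
    show lookupSub ((p.1, p.2.applySubst σ) :: compSubst σ τ) v = _
    rw [lookupSub_cons, lookupSub_cons]
    by_cases h : p.1 = v
    · simp [h]
    · simp [h, ih]

theorem keysOf_compSubst (σ τ : Subst) :
    keysOf (compSubst σ τ) = keysOf τ ++ keysOf σ := by
  simp [compSubst, keysOf]

@[simp] theorem keysOf_dk (Δ : List TVar) : keysOf (dk Δ) = Δ := by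
  induction Δ with
  | nil => rfl
  | cons a Δ ih => simpa [dk, keysOf] using ih

theorem mem_listDiff {l d : List TVar} {x : TVar} :
    x ∈ listDiff l d ↔ x ∈ l ∧ x ∉ d := by
  simp [listDiff, List.mem_dedup, List.mem_filter]

/-! ### Unfolding lemmas for Ty functions -/

@[simp] theorem ftv_tvar (a : TVar) : (Ty.tvar a).ftv = [a] := by rw [Ty.ftv]

@[simp] theorem ftv_con (d : ℕ) (args : List Ty) :
    (Ty.con d args).ftv = (args.map Ty.ftv).flatten := by
  rw [Ty.ftv]
  congr 1
  rw [List.map_attach_eq_pmap]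
  simp

@[simp] theorem ftv_all (a : TVar) (A : Ty) :
    (Ty.all a A).ftv = A.ftv.filter (fun b => decide (b ≠ a)) := by rw [Ty.ftv]

theorem mem_ftv_all {a x : TVar} {A : Ty} :
    x ∈ (Ty.all a A).ftv ↔ x ∈ A.ftv ∧ x ≠ a := by
  simp [List.mem_filter]

theorem mem_ftv_con {d : ℕ} {args : List Ty} {x : TVar} :
    x ∈ (Ty.con d args).ftv ↔ ∃ A ∈ args, x ∈ A.ftv := by
  simp [List.mem_flatten]

@[simp] theorem applySubst_tvar (a : TVar) (θ : Subst) :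
    (Ty.tvar a).applySubst θ = lookupSub θ a := by rw [Ty.applySubst]

@[simp] theorem applySubst_con (d : ℕ) (args : List Ty) (θ : Subst) :
    (Ty.con d args).applySubst θ = .con d (args.map (Ty.applySubst · θ)) := by
  rw [Ty.applySubst]
  congr 1
  rw [List.map_attach_eq_pmap]
  simp

theorem applySubst_all (a : TVar) (A : Ty) (θ : Subst) :
    (Ty.all a A).applySubst θ =
      .all (freshFor (ftvSubst θ ++ A.ftv ++ [a]))
        (A.applySubst ((a, .tvar (freshFor (ftvSubst θ ++ A.ftv ++ [a]))) :: θ)) := by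
  rw [Ty.applySubst]


/-! ### de Bruijn representation -/

inductive DB
  | bvar (i : ℕ)
  | fvar (a : TVar)
  | con (d : ℕ) (args : List DB)
  | all (t : DB)

theorem Ty.myInduction {P : Ty → Prop}
    (hv : ∀ a, P (.tvar a))
    (hc : ∀ d args, (∀ A ∈ args, P A) → P (.con d args))
    (ha : ∀ a A, P A → P (.all a A)) : ∀ A, P A
  | .tvar a => hv a
  | .con d args => hc d args (fun A hA =>
      have := List.sizeOf_lt_of_mem hA
      Ty.myInduction hv hc ha A)
  | .all a A => ha a A (Ty.myInduction hv hc ha A)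
  termination_by A => sizeOf A
  decreasing_by
    all_goals simp_wf
    all_goals omega

theorem DB.myInduction {P : DB → Prop}
    (hb : ∀ i, P (.bvar i))
    (hf : ∀ a, P (.fvar a))
    (hc : ∀ d args, (∀ t ∈ args, P t) → P (.con d args))
    (ha : ∀ t, P t → P (.all t)) : ∀ t, P t
  | .bvar i => hb i
  | .fvar a => hf a
  | .con d args => hc d args (fun t ht =>
      have := List.sizeOf_lt_of_mem ht
      DB.myInduction hb hf hc ha t)
  | .all t => ha t (DB.myInduction hb hf hc ha t)
  termination_by t => sizeOf t
  decreasing_by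
    all_goals simp_wf
    all_goals omega

def vidx (a : TVar) : List TVar → Option ℕ
  | [] => none
  | b :: l => if a = b then some 0 else (vidx a l).map (· + 1)

theorem vidx_lt {a : TVar} : ∀ {l : List TVar} {i : ℕ}, vidx a l = some i → i < l.length := by
  intro l
  induction l with
  | nil => intro i h; simp [vidx] at h
  | cons b l ih =>
    intro i h
    rw [vidx] at h
    by_cases hab : a = b
    · simp [hab] at h; rw [← h]; simp
    · simp only [if_neg hab, Option.map_eq_some_iff] at h
      rcases h with ⟨j, hj, rfl⟩
      have := ih hj
      simp only [List.length_cons]; omega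

theorem vidx_none {a : TVar} : ∀ {l : List TVar}, vidx a l = none ↔ a ∉ l := by
  intro l
  induction l with
  | nil => simp [vidx]
  | cons b l ih =>
    rw [vidx]
    by_cases hab : a = b
    · simp [hab]
    · simp [hab, ih]

theorem vidx_mem {a : TVar} {l : List TVar} (h : a ∈ l) : ∃ i, vidx a l = some i := by
  cases hv : vidx a l with
  | none => exact absurd (vidx_none.1 hv) (by simp [h])
  | some i => exact ⟨i, rfl⟩

theorem vidx_get : ∀ {l : List TVar} {a : TVar} {i : ℕ}, vidx a l = some i → l[i]? = some a := by
  intro l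
  induction l with
  | nil => intro a i h; simp [vidx] at h
  | cons b l ih =>
    intro a i h
    rw [vidx] at h
    by_cases hab : a = b
    · simp [hab] at h; subst hab; simp [← h]
    · simp only [if_neg hab, Option.map_eq_some_iff] at h
      rcases h with ⟨j, hj, rfl⟩
      simpa using ih hj

def toDB : Ty → List TVar → DB
  | .tvar a, ctx =>
      match vidx a ctx with
      | some i => .bvar i
      | none => .fvar a
  | .con d args, ctx => .con d (args.attach.map fun x => toDB x.1 ctx)
  | .all a A, ctx => .all (toDB A (a :: ctx))
  termination_by A _ => sizeOf A
  decreasing_by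
    all_goals simp_wf
    all_goals try (have h := List.sizeOf_lt_of_mem x.2)
    all_goals omega

theorem toDB_tvar (a : TVar) (ctx : List TVar) :
    toDB (.tvar a) ctx = match vidx a ctx with
      | some i => .bvar i
      | none => .fvar a := by rw [toDB]

@[simp] theorem toDB_con (d : ℕ) (args : List Ty) (ctx : List TVar) :
    toDB (.con d args) ctx = .con d (args.map (toDB · ctx)) := by
  rw [toDB]
  congr 1
  rw [List.map_attach_eq_pmap]
  simp

@[simp] theorem toDB_all (a : TVar) (A : Ty) (ctx : List TVar) :
    toDB (.all a A) ctx = .all (toDB A (a :: ctx)) := by rw [toDB]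

theorem toDB_tvar_not_mem {a : TVar} {ctx : List TVar} (h : a ∉ ctx) :
    toDB (.tvar a) ctx = .fvar a := by
  rw [toDB_tvar, vidx_none.2 h]

def dbSubst : DB → (TVar → DB) → DB
  | .bvar i, _ => .bvar i
  | .fvar a, F => F a
  | .con d args, F => .con d (args.attach.map fun x => dbSubst x.1 F)
  | .all t, F => .all (dbSubst t F)
  termination_by t _ => sizeOf t
  decreasing_by
    all_goals simp_wf
    all_goals try (have h := List.sizeOf_lt_of_mem x.2)
    all_goals omega

@[simp] theorem dbSubst_bvar (i : ℕ) (F : TVar → DB) : dbSubst (.bvar i) F = .bvar i := by rw [dbSubst]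
@[simp] theorem dbSubst_fvar (a : TVar) (F : TVar → DB) : dbSubst (.fvar a) F = F a := by rw [dbSubst]
@[simp] theorem dbSubst_con (d : ℕ) (args : List DB) (F : TVar → DB) :
    dbSubst (.con d args) F = .con d (args.map (dbSubst · F)) := by
  rw [dbSubst]; congr 1; rw [List.map_attach_eq_pmap]; simp
@[simp] theorem dbSubst_all (t : DB) (F : TVar → DB) : dbSubst (.all t) F = .all (dbSubst t F) := by
  rw [dbSubst]

def dbFv : DB → List TVar
  | .bvar _ => []
  | .fvar a => [a]
  | .con _ args => (args.attach.map fun x => dbFv x.1).flatten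
  | .all t => dbFv t
  termination_by t => sizeOf t
  decreasing_by
    all_goals simp_wf
    all_goals try (have h := List.sizeOf_lt_of_mem x.2)
    all_goals omega

@[simp] theorem dbFv_bvar (i : ℕ) : dbFv (.bvar i) = [] := by rw [dbFv]
@[simp] theorem dbFv_fvar (a : TVar) : dbFv (.fvar a) = [a] := by rw [dbFv]
@[simp] theorem dbFv_con (d : ℕ) (args : List DB) :
    dbFv (.con d args) = (args.map dbFv).flatten := by
  rw [dbFv]; congr 1; rw [List.map_attach_eq_pmap]; simp
@[simp] theorem dbFv_all (t : DB) : dbFv (.all t) = dbFv t := by rw [dbFv]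

def dbSize : DB → ℕ
  | .bvar _ => 1
  | .fvar _ => 1
  | .con _ args => 1 + (args.attach.map fun x => dbSize x.1).sum
  | .all t => 1 + dbSize t
  termination_by t => sizeOf t
  decreasing_by
    all_goals simp_wf
    all_goals try (have h := List.sizeOf_lt_of_mem x.2)
    all_goals omega

@[simp] theorem dbSize_bvar (i : ℕ) : dbSize (.bvar i) = 1 := by rw [dbSize]
@[simp] theorem dbSize_fvar (a : TVar) : dbSize (.fvar a) = 1 := by rw [dbSize]
@[simp] theorem dbSize_con (d : ℕ) (args : List DB) :
    dbSize (.con d args) = 1 + (args.map dbSize).sum := by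
  rw [dbSize]; congr 1; rw [List.map_attach_eq_pmap]; simp
@[simp] theorem dbSize_all (t : DB) : dbSize (.all t) = 1 + dbSize t := by rw [dbSize]

def instV : DB → DB → ℕ → DB
  | .bvar i, u, k => if i = k then u else .bvar i
  | .fvar a, _, _ => .fvar a
  | .con d args, u, k => .con d (args.attach.map fun x => instV x.1 u k)
  | .all t, u, k => .all (instV t u (k + 1))
  termination_by t _ _ => sizeOf t
  decreasing_by
    all_goals simp_wf
    all_goals try (have h := List.sizeOf_lt_of_mem x.2)
    all_goals omega

@[simp] theorem instV_bvar (i : ℕ) (u : DB) (k : ℕ) :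
    instV (.bvar i) u k = if i = k then u else .bvar i := by rw [instV]
@[simp] theorem instV_fvar (a : TVar) (u : DB) (k : ℕ) : instV (.fvar a) u k = .fvar a := by rw [instV]
@[simp] theorem instV_con (d : ℕ) (args : List DB) (u : DB) (k : ℕ) :
    instV (.con d args) u k = .con d (args.map (instV · u k)) := by
  rw [instV]; congr 1; rw [List.map_attach_eq_pmap]; simp
@[simp] theorem instV_all (t : DB) (u : DB) (k : ℕ) :
    instV (.all t) u k = .all (instV t u (k + 1)) := by rw [instV]

def abstr (c : TVar) : DB → ℕ → DB
  | .bvar i, _ => .bvar i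
  | .fvar a, k => if a = c then .bvar k else .fvar a
  | .con d args, k => .con d (args.attach.map fun x => abstr c x.1 k)
  | .all t, k => .all (abstr c t (k + 1))
  termination_by t _ => sizeOf t
  decreasing_by
    all_goals simp_wf
    all_goals try (have h := List.sizeOf_lt_of_mem x.2)
    all_goals omega

@[simp] theorem abstr_bvar (c : TVar) (i : ℕ) (k : ℕ) : abstr c (.bvar i) k = .bvar i := by rw [abstr]
@[simp] theorem abstr_fvar (c : TVar) (a : TVar) (k : ℕ) :
    abstr c (.fvar a) k = if a = c then .bvar k else .fvar a := by rw [abstr]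
@[simp] theorem abstr_con (c : TVar) (d : ℕ) (args : List DB) (k : ℕ) :
    abstr c (.con d args) k = .con d (args.map (abstr c · k)) := by
  rw [abstr]; congr 1; rw [List.map_attach_eq_pmap]; simp
@[simp] theorem abstr_all (c : TVar) (t : DB) (k : ℕ) :
    abstr c (.all t) k = .all (abstr c t (k + 1)) := by rw [abstr]

inductive ClosedAt : DB → ℕ → Prop
  | bvar {i k} : i < k → ClosedAt (.bvar i) k
  | fvar {a k} : ClosedAt (.fvar a) k
  | con {d args k} : (∀ t ∈ args, ClosedAt t k) → ClosedAt (.con d args) k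
  | all {t k} : ClosedAt t (k + 1) → ClosedAt (.all t) k

inductive DbAllFree : DB → Prop
  | bvar {i} : DbAllFree (.bvar i)
  | fvar {a} : DbAllFree (.fvar a)
  | con {d args} : (∀ t ∈ args, DbAllFree t) → DbAllFree (.con d args)

inductive AllFree : Ty → Prop
  | tvar {a} : AllFree (.tvar a)
  | con {d args} : (∀ A ∈ args, AllFree A) → AllFree (.con d args)

/-! ### db lemmas -/

theorem dbSubst_id (t : DB) : dbSubst t .fvar = t := by
  induction t using DB.myInduction with
  | hb i => simp
  | hf a => simp
  | hc d args ih => simp only [dbSubst_con, DB.con.injEq, true_and]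
                    exact List.map_congr_left ih |>.trans (List.map_id _)
  | ha t ih => simp [ih]

theorem dbSubst_congr {F G : TVar → DB} : ∀ {t : DB}, (∀ v ∈ dbFv t, F v = G v) →
    dbSubst t F = dbSubst t G := by
  intro t
  induction t using DB.myInduction with
  | hb i => intro _; simp
  | hf a => intro h; simpa using h a (by simp)
  | hc d args ih =>
    intro h
    simp only [dbSubst_con, DB.con.injEq, true_and]
    apply List.map_congr_left
    intro t ht
    apply ih t ht
    intro v hv
    apply h v
    simp only [dbFv_con, List.mem_flatten, List.mem_map]
    exact ⟨dbFv t, ⟨t, ht, rfl⟩, hv⟩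
  | ha t ih =>
    intro h
    simp only [dbSubst_all, DB.all.injEq]
    exact ih (by simpa using h)

theorem dbSubst_comp (F G : TVar → DB) : ∀ (t : DB),
    dbSubst (dbSubst t F) G = dbSubst t (fun v => dbSubst (F v) G) := by
  intro t
  induction t using DB.myInduction with
  | hb i => simp
  | hf a => simp
  | hc d args ih =>
    simp only [dbSubst_con, List.map_map, DB.con.injEq, true_and]
    exact List.map_congr_left (fun t ht => ih t ht)
  | ha t ih => simp [ih]

theorem mem_dbFv_dbSubst {x : TVar} {F : TVar → DB} : ∀ {t : DB},
    (x ∈ dbFv (dbSubst t F) ↔ ∃ v ∈ dbFv t, x ∈ dbFv (F v)) := by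
  intro t
  induction t using DB.myInduction with
  | hb i => simp
  | hf a => simp
  | hc d args ih =>
    simp only [dbSubst_con, dbFv_con, List.mem_flatten, List.mem_map, List.map_map]
    constructor
    · rintro ⟨l, ⟨t, ht, rfl⟩, hx⟩
      rcases (ih t ht).1 hx with ⟨v, hv, hxv⟩
      exact ⟨v, ⟨dbFv t, ⟨t, ht, rfl⟩, hv⟩, hxv⟩
    · rintro ⟨v, ⟨l, ⟨t, ht, rfl⟩, hv⟩, hxv⟩
      exact ⟨dbFv (dbSubst t F), ⟨t, ht, rfl⟩, (ih t ht).2 ⟨v, hv, hxv⟩⟩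
  | ha t ih => simpa using ih

theorem dbSize_pos (t : DB) : 1 ≤ dbSize t := by
  induction t using DB.myInduction with
  | hb i => simp
  | hf a => simp
  | hc d args _ => simp
  | ha t _ => simp

theorem dbSize_dbSubst_one {F : TVar → DB} (h1 : ∀ v, dbSize (F v) = 1) : ∀ (t : DB),
    dbSize (dbSubst t F) = dbSize t := by
  intro t
  induction t using DB.myInduction with
  | hb i => simp
  | hf a => simp [h1]
  | hc d args ih =>
    simp only [dbSubst_con, dbSize_con, List.map_map]
    have heq : List.map (dbSize ∘ fun t => dbSubst t F) args = List.map dbSize args :=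
      List.map_congr_left (fun t ht => ih t ht)
    rw [heq]
  | ha t ih => simp [ih]

theorem dbSize_le_dbSubst {x : TVar} {F : TVar → DB} : ∀ {t : DB}, x ∈ dbFv t →
    dbSize (F x) ≤ dbSize (dbSubst t F) := by
  intro t
  induction t using DB.myInduction with
  | hb i => simp
  | hf a => intro h; simp at h; subst h; simp
  | hc d args ih =>
    intro h
    simp only [dbFv_con, List.mem_flatten, List.mem_map] at h
    rcases h with ⟨l, ⟨t, ht, rfl⟩, hx⟩
    have h1 := ih t ht hx
    have h2 : dbSize (dbSubst t F) ≤ ((args.map (dbSubst · F)).map dbSize).sum := by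
      apply List.single_le_sum (by intro y _; omega)
      exact List.mem_map.2 ⟨dbSubst t F, List.mem_map.2 ⟨t, ht, rfl⟩, rfl⟩
    simp only [dbSubst_con, dbSize_con]
    omega
  | ha t ih =>
    intro h
    simp only [dbFv_all] at h
    have := ih h
    simp only [dbSubst_all, dbSize_all]
    omega

theorem dbSize_lt_dbSubst {x : TVar} {F : TVar → DB} : ∀ {t : DB}, x ∈ dbFv t →
    t ≠ .fvar x → dbSize (F x) < dbSize (dbSubst t F) := by
  intro t
  induction t using DB.myInduction with
  | hb i => simp
  | hf a => intro h hne; simp at h; subst h; simp at hne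
  | hc d args ih =>
    intro h _
    simp only [dbFv_con, List.mem_flatten, List.mem_map] at h
    rcases h with ⟨l, ⟨t, ht, rfl⟩, hx⟩
    have h1 := dbSize_le_dbSubst (F := F) hx
    have h2 : dbSize (dbSubst t F) ≤ ((args.map (dbSubst · F)).map dbSize).sum := by
      apply List.single_le_sum (by intro y _; omega)
      exact List.mem_map.2 ⟨dbSubst t F, List.mem_map.2 ⟨t, ht, rfl⟩, rfl⟩
    simp only [dbSubst_con, dbSize_con]
    omega
  | ha t ih =>
    intro h _
    simp only [dbFv_all] at h
    have := dbSize_le_dbSubst (F := F) h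
    simp only [dbSubst_all, dbSize_all]
    omega

theorem instV_closed {u : DB} : ∀ {t : DB} {k j : ℕ}, ClosedAt t k → k ≤ j →
    instV t u j = t := by
  intro t k j h
  induction h generalizing j with
  | bvar hik => intro hkj; simp; omega
  | fvar => intro _; simp
  | con _ ih =>
    intro hkj
    simp only [instV_con, DB.con.injEq, true_and]
    exact (List.map_congr_left (fun t ht => ih t ht hkj)).trans (List.map_id _)
  | all _ ih =>
    intro hkj
    simp only [instV_all, DB.all.injEq]
    exact ih (by omega)

theorem dbAllFree_dbSubst {F : TVar → DB} : ∀ {t : DB},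
    DbAllFree (dbSubst t F) ↔ (DbAllFree t ∧ ∀ v ∈ dbFv t, DbAllFree (F v)) := by
  intro t
  induction t using DB.myInduction with
  | hb i =>
    simp only [dbSubst_bvar, dbFv_bvar]
    exact ⟨fun h => ⟨h, by simp⟩, fun h => h.1⟩
  | hf a =>
    simp only [dbSubst_fvar, dbFv_fvar]
    constructor
    · intro h
      refine ⟨DbAllFree.fvar, ?_⟩
      intro v hv
      simp at hv
      subst hv
      exact h
    · intro h
      exact h.2 a (by simp)
  | hc d args ih =>
    simp only [dbSubst_con]
    constructor
    · intro h
      cases h with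
      | con hall =>
        constructor
        · apply DbAllFree.con
          intro t ht
          exact ((ih t ht).1 (hall _ (List.mem_map.2 ⟨t, ht, rfl⟩))).1
        · intro v hv
          simp only [dbFv_con, List.mem_flatten, List.mem_map] at hv
          rcases hv with ⟨l, ⟨t, ht, rfl⟩, hv⟩
          exact ((ih t ht).1 (hall _ (List.mem_map.2 ⟨t, ht, rfl⟩))).2 v hv
    · rintro ⟨haf, himg⟩
      cases haf with
      | con hall =>
        apply DbAllFree.con
        intro t' ht'
        rcases List.mem_map.1 ht' with ⟨t, ht, rfl⟩
        apply (ih t ht).2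
        refine ⟨hall t ht, ?_⟩
        intro v hv
        apply himg v
        simp only [dbFv_con, List.mem_flatten, List.mem_map]
        exact ⟨dbFv t, ⟨t, ht, rfl⟩, hv⟩
  | ha t ih =>
    simp only [dbSubst_all]
    constructor
    · intro h; cases h
    · rintro ⟨h, _⟩; cases h

/-! ### toDB lemmas -/

theorem vidx_append_left {v : TVar} {l₁ : List TVar} {i : ℕ} (h : vidx v l₁ = some i)
    (l₂ : List TVar) : vidx v (l₁ ++ l₂) = some i := by
  induction l₁ generalizing i with
  | nil => simp [vidx] at h
  | cons b l₁ ih =>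
    rw [vidx] at h
    by_cases hvb : v = b
    · rw [if_pos hvb] at h
      rw [List.cons_append, vidx, if_pos hvb]
      exact h
    · simp only [if_neg hvb, Option.map_eq_some_iff] at h
      rcases h with ⟨j, hj, rfl⟩
      rw [List.cons_append, vidx, if_neg hvb]
      rw [ih hj]
      simp
theorem vidx_append_right {v : TVar} {l₁ : List TVar} (h : v ∉ l₁) (l₂ : List TVar) :
    vidx v (l₁ ++ l₂) = (vidx v l₂).map (· + l₁.length) := by
  induction l₁ with
  | nil => simp [vidx]
  | cons b l₁ ih =>
    simp only [List.mem_cons, not_or] at h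
    rw [List.cons_append, vidx, if_neg h.1, ih h.2]
    cases vidx v l₂ with
    | none => simp
    | some j => simp [List.length_cons]; omega

theorem mem_dbFv_toDB {x : TVar} : ∀ {A : Ty} {ctx : List TVar},
    x ∈ dbFv (toDB A ctx) ↔ x ∈ A.ftv ∧ x ∉ ctx := by
  intro A
  induction A using Ty.myInduction with
  | hv a =>
    intro ctx
    rw [toDB_tvar]
    cases hv : vidx a ctx with
    | some i =>
      have ha : a ∈ ctx := by
        by_contra hc
        rw [vidx_none.2 hc] at hv
        exact nomatch hv
      simp only [dbFv_bvar, List.not_mem_nil, false_iff, ftv_tvar, List.mem_singleton]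
      rintro ⟨rfl, hx⟩
      exact hx ha
    | none =>
      have ha : a ∉ ctx := vidx_none.1 hv
      simp only [dbFv_fvar, List.mem_singleton, ftv_tvar]
      constructor
      · rintro rfl; exact ⟨by simp, ha⟩
      · rintro ⟨h, _⟩; simpa using h
  | hc d args ih =>
    intro ctx
    simp only [toDB_con, dbFv_con, List.mem_flatten, List.mem_map, List.map_map, mem_ftv_con]
    constructor
    · rintro ⟨l, ⟨A, hA, rfl⟩, hx⟩
      have := (ih A hA).1 (by simpa using hx)
      exact ⟨⟨A, hA, this.1⟩, this.2⟩
    · rintro ⟨⟨A, hA, hx⟩, hctx⟩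
      refine ⟨(dbFv ∘ fun A => toDB A ctx) A, ⟨A, hA, rfl⟩, ?_⟩
      simpa using (ih A hA).2 ⟨hx, hctx⟩
  | ha a A ih =>
    intro ctx
    simp only [toDB_all, dbFv_all, ih, mem_ftv_all, List.mem_cons]
    constructor
    · rintro ⟨h1, h2⟩
      exact ⟨⟨h1, fun hxa => h2 (Or.inl hxa)⟩, fun hx => h2 (Or.inr hx)⟩
    · rintro ⟨⟨h1, h2⟩, h3⟩
      exact ⟨h1, fun h => h.elim h2 h3⟩

theorem closedAt_toDB : ∀ (A : Ty) (ctx : List TVar), ClosedAt (toDB A ctx) ctx.length := by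
  intro A
  induction A using Ty.myInduction with
  | hv a =>
    intro ctx
    rw [toDB_tvar]
    cases hv : vidx a ctx with
    | some i => exact ClosedAt.bvar (vidx_lt hv)
    | none => exact ClosedAt.fvar
  | hc d args ih =>
    intro ctx
    simp only [toDB_con]
    apply ClosedAt.con
    intro t ht
    rcases List.mem_map.1 ht with ⟨A, hA, rfl⟩
    exact ih A hA ctx
  | ha a A ih =>
    intro ctx
    simp only [toDB_all]
    exact ClosedAt.all (ih (a :: ctx))

theorem dbSize_toDB : ∀ (A : Ty) (ctx ctx' : List TVar),
    dbSize (toDB A ctx) = dbSize (toDB A ctx') := by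
  intro A
  induction A using Ty.myInduction with
  | hv a =>
    intro ctx ctx'
    rw [toDB_tvar, toDB_tvar]
    cases vidx a ctx <;> cases vidx a ctx' <;> simp
  | hc d args ih =>
    intro ctx ctx'
    simp only [toDB_con, dbSize_con, List.map_map]
    have : List.map (dbSize ∘ fun A => toDB A ctx) args
        = List.map (dbSize ∘ fun A => toDB A ctx') args :=
      List.map_congr_left (fun A hA => ih A hA ctx ctx')
    rw [this]
  | ha a A ih =>
    intro ctx ctx'
    simp only [toDB_all, dbSize_all]
    rw [ih (a :: ctx) (a :: ctx')]

theorem toDB_ctx_congr : ∀ (A : Ty) (bnd ctx₁ ctx₂ : List TVar),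
    (∀ w ∈ A.ftv, w ∉ bnd → (w ∉ ctx₁ ∧ w ∉ ctx₂)) →
    toDB A (bnd ++ ctx₁) = toDB A (bnd ++ ctx₂) := by
  intro A
  induction A using Ty.myInduction with
  | hv a =>
    intro bnd ctx₁ ctx₂ h
    rw [toDB_tvar, toDB_tvar]
    cases hv : vidx a bnd with
    | some i => rw [vidx_append_left hv, vidx_append_left hv]
    | none =>
      have ha : a ∉ bnd := vidx_none.1 hv
      have h2 := h a (by simp) ha
      rw [vidx_append_right ha, vidx_append_right ha, vidx_none.2 h2.1, vidx_none.2 h2.2]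
  | hc d args ih =>
    intro bnd ctx₁ ctx₂ h
    simp only [toDB_con, DB.con.injEq, true_and]
    apply List.map_congr_left
    intro A hA
    apply ih A hA
    intro w hw hwb
    exact h w (mem_ftv_con.2 ⟨A, hA, hw⟩) hwb
  | ha a A ih =>
    intro bnd ctx₁ ctx₂ h
    simp only [toDB_all, DB.all.injEq]
    have := ih (a :: bnd) ctx₁ ctx₂ (by
      intro w hw hwb
      simp only [List.mem_cons, not_or] at hwb
      exact h w (mem_ftv_all.2 ⟨hw, hwb.1⟩) hwb.2)
    simpa using this

theorem toDB_abstr : ∀ (A : Ty) (bnd : List TVar) (c : TVar),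
    toDB A (bnd ++ [c]) = abstr c (toDB A bnd) bnd.length := by
  intro A
  induction A using Ty.myInduction with
  | hv a =>
    intro bnd c
    rw [toDB_tvar, toDB_tvar]
    cases hv : vidx a bnd with
    | some i => rw [vidx_append_left hv]; simp
    | none =>
      have ha : a ∉ bnd := vidx_none.1 hv
      rw [vidx_append_right ha]
      by_cases hac : a = c
      · subst hac
        simp [vidx]
      · simp [vidx, hac]
  | hc d args ih =>
    intro bnd c
    simp only [toDB_con, abstr_con, DB.con.injEq, true_and, List.map_map]
    apply List.map_congr_left
    intro A hA
    exact ih A hA bnd c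
  | ha a A ih =>
    intro bnd c
    simp only [toDB_all, abstr_all, DB.all.injEq]
    have := ih (a :: bnd) c
    simpa using this

theorem toDB_bridge {u : DB} {F : TVar → DB} (hF : ∀ v, ClosedAt (F v) 0) :
    ∀ (A : Ty) (bnd : List TVar) (a : TVar),
    instV (dbSubst (toDB A (bnd ++ [a])) F) u bnd.length
      = dbSubst (toDB A bnd) (fun v => if v = a then u else F v) := by
  intro A
  induction A using Ty.myInduction with
  | hv v =>
    intro bnd a
    rw [toDB_tvar, toDB_tvar]
    cases hv : vidx v bnd with
    | some i =>
      have hilt := vidx_lt hv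
      rw [vidx_append_left hv]
      simp only [dbSubst_bvar, instV_bvar]
      rw [if_neg (by omega)]
    | none =>
      have hvb : v ∉ bnd := vidx_none.1 hv
      rw [vidx_append_right hvb]
      by_cases hva : v = a
      · subst hva
        simp [vidx]
      · simp only [vidx, if_neg hva, Option.map_none, dbSubst_fvar, if_neg hva]
        exact instV_closed (hF v) (Nat.zero_le _)
  | hc d args ih =>
    intro bnd a
    simp only [toDB_con, dbSubst_con, instV_con, List.map_map, DB.con.injEq, true_and]
    apply List.map_congr_left
    intro A hA
    exact ih A hA bnd a
  | ha b A ih =>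
    intro bnd a
    simp only [toDB_all, dbSubst_all, instV_all, DB.all.injEq]
    have := ih (b :: bnd) a
    simpa using this

/-! ### The key commutation lemma -/

theorem star : ∀ (A : Ty) (θ : Subst) (bnd ctx : List TVar),
    (∀ v i, vidx v bnd = some i →
      ∃ c, ctx[i]? = some c ∧ lookupSub θ v = .tvar c ∧ vidx c ctx = some i) →
    (∀ v ∈ A.ftv, v ∉ bnd → ∀ w ∈ (lookupSub θ v).ftv, w ∉ ctx) →
    (∀ x ∈ ctx, x ∈ ftvSubst θ) →
    toDB (A.applySubst θ) ctx = dbSubst (toDB A bnd) (fun v => toDB (lookupSub θ v) ctx) := by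
  intro A
  induction A using Ty.myInduction with
  | hv v =>
    intro θ bnd ctx hC1 _ _
    rw [applySubst_tvar]
    conv_rhs => rw [toDB_tvar]
    cases hv : vidx v bnd with
    | some i =>
      rcases hC1 v i hv with ⟨c, _, hlk, hvc⟩
      rw [hlk, toDB_tvar, hvc]
      simp
    | none => simp
  | hc d args ih =>
    intro θ bnd ctx hC1 hC2 hC3
    simp only [applySubst_con, toDB_con, dbSubst_con, List.map_map, DB.con.injEq, true_and]
    apply List.map_congr_left
    intro A hA
    apply ih A hA θ bnd ctx hC1 _ hC3
    intro v hv hvb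
    exact hC2 v (mem_ftv_con.2 ⟨A, hA, hv⟩) hvb
  | ha a A ih =>
    intro θ bnd ctx hC1 hC2 hC3
    rw [applySubst_all]
    set c := freshFor (ftvSubst θ ++ A.ftv ++ [a]) with hc
    have hcfresh := freshFor_not_mem (ftvSubst θ ++ A.ftv ++ [a])
    rw [← hc] at hcfresh
    simp only [List.mem_append, List.mem_singleton, not_or] at hcfresh
    obtain ⟨⟨hcθ, hcA⟩, hca⟩ := hcfresh
    simp only [toDB_all, dbSubst_all, DB.all.injEq]
    -- freeness facts about images of θ on free vars of A other than a
    have himg : ∀ v ∈ A.ftv, v ∉ (a :: bnd) → ∀ w ∈ (lookupSub θ v).ftv, w ∉ (c :: ctx) := by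
      intro v hv hvb w hw
      simp only [List.mem_cons, not_or] at hvb
      have hwctx : w ∉ ctx := hC2 v (mem_ftv_all.2 ⟨hv, hvb.1⟩) hvb.2 w hw
      simp only [List.mem_cons, not_or]
      refine ⟨?_, hwctx⟩
      by_cases hvk : v ∈ keysOf θ
      · intro hwc
        exact hcθ (hwc ▸ ftv_lookupSub_subset hvk w hw)
      · rw [lookupSub_not_mem hvk] at hw
        simp at hw
        subst hw
        intro hwc
        exact hcA (hwc ▸ hv)
    have := ih ((a, .tvar c) :: θ) (a :: bnd) (c :: ctx) ?_ ?_ ?_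
    · rw [this]
      apply dbSubst_congr
      intro v hv
      rcases mem_dbFv_toDB.1 hv with ⟨hvA, hvb⟩
      have hva : v ≠ a := by
        intro h; exact hvb (h ▸ List.mem_cons_self)
      rw [lookupSub_cons, if_neg (by simpa using (Ne.symm hva))]
      have := toDB_ctx_congr (lookupSub θ v) [] (c :: ctx) ctx ?_
      · simpa using this
      · intro w hw _
        have := himg v hvA hvb w hw
        simp only [List.mem_cons, not_or] at this
        exact ⟨by simp [this.1, this.2], this.2⟩
    · -- C1 for the extended contexts
      intro v i hvi
      rw [vidx] at hvi
      by_cases hva : v = a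
      · rw [if_pos hva] at hvi
        have h0 : i = 0 := by
          injection hvi with h
          omega
        subst h0
        refine ⟨c, rfl, ?_, ?_⟩
        · rw [lookupSub_cons, if_pos (by simp [hva])]
        · rw [vidx, if_pos rfl]
      · rw [if_neg hva] at hvi
        rcases Option.map_eq_some_iff.1 hvi with ⟨j, hj, rfl⟩
        rcases hC1 v j hj with ⟨c₀, hget, hlk, hvc₀⟩
        have hc₀ctx : c₀ ∈ ctx := by
          by_contra hcon
          rw [vidx_none.2 hcon] at hvc₀
          exact nomatch hvc₀
        have hc₀c : c₀ ≠ c := by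
          intro h
          exact hcθ (h ▸ hC3 c₀ hc₀ctx)
        refine ⟨c₀, by simpa using hget, ?_, ?_⟩
        · rw [lookupSub_cons, if_neg (by simpa using (Ne.symm hva))]
          exact hlk
        · rw [vidx, if_neg hc₀c, hvc₀]
          rfl
    · -- C2 for the extended contexts
      intro v hv hvb w hw
      have hva : v ≠ a := by
        intro h
        exact hvb (h ▸ List.mem_cons_self)
      rw [lookupSub_cons, if_neg (by simpa using (Ne.symm hva))] at hw
      exact himg v hv hvb w hw
    · -- C3 for the extended contexts
      intro x hx
      rcases List.mem_cons.1 hx with h | hx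
      · exact mem_ftvSubst.2 ⟨(a, .tvar c), List.mem_cons_self, by simp [h]⟩
      · rcases mem_ftvSubst.1 (hC3 x hx) with ⟨p, hp, hxp⟩
        exact mem_ftvSubst.2 ⟨p, List.mem_cons_of_mem _ hp, hxp⟩

theorem star0 (A : Ty) (θ : Subst) :
    toDB (A.applySubst θ) [] = dbSubst (toDB A []) (fun v => toDB (lookupSub θ v) []) := by
  apply star A θ [] []
  · intro v i h; simp [vidx] at h
  · intro v _ _ w _; simp
  · intro x hx; simp at hx

theorem star2 (A : Ty) (σ τ : Subst) :
    toDB ((A.applySubst σ).applySubst τ) []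
      = dbSubst (toDB A []) (fun v => toDB ((lookupSub σ v).applySubst τ) []) := by
  rw [star0, star0, dbSubst_comp]
  apply dbSubst_congr
  intro v _
  rw [← star0]

/-! ### Ty-level corollaries -/

theorem mem_ftv_toDB {x : TVar} {A : Ty} : x ∈ dbFv (toDB A []) ↔ x ∈ A.ftv := by
  rw [mem_dbFv_toDB]
  simp

theorem toDB_ren {A : Ty} {a c : TVar} (hc : c ∉ A.ftv) :
    toDB (A.applySubst [(a, .tvar c)]) [c] = toDB A [a] := by
  rw [star A [(a, .tvar c)] [a] [c]]
  · apply (dbSubst_congr _).trans (dbSubst_id _)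
    intro v hv
    rcases mem_dbFv_toDB.1 hv with ⟨hvA, hvb⟩
    have hva : v ≠ a := by simpa using hvb
    have hvc : v ≠ c := fun h => hc (h ▸ hvA)
    rw [lookupSub_cons, if_neg (by simpa using (Ne.symm hva))]
    rw [lookupSub_nil, toDB_tvar, vidx, if_neg hvc]
    rfl
  · intro v i hvi
    rw [vidx] at hvi
    by_cases hva : v = a
    · rw [if_pos hva] at hvi
      have h0 : i = 0 := by injection hvi with h; omega
      subst h0
      refine ⟨c, rfl, ?_, ?_⟩
      · rw [lookupSub_cons, if_pos (by simp [hva])]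
      · rw [vidx, if_pos rfl]
    · rw [if_neg hva] at hvi
      simp [vidx] at hvi
  · intro v hv hvb w hw
    have hva : v ≠ a := by simpa using hvb
    rw [lookupSub_cons, if_neg (by simpa using (Ne.symm hva)), lookupSub_nil] at hw
    simp at hw
    subst hw
    intro hvc
    simp at hvc
    exact hc (hvc ▸ hv)
  · intro x hx
    simp at hx
    subst hx
    exact mem_ftvSubst.2 ⟨(a, .tvar x), List.mem_cons_self, by simp⟩

theorem dbSize_rename (A : Ty) (a c : TVar) :
    dbSize (toDB (A.applySubst [(a, .tvar c)]) []) = dbSize (toDB A []) := by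
  rw [star0]
  apply dbSize_dbSubst_one
  intro v
  rw [lookupSub_cons]
  by_cases h : a = v
  · rw [if_pos h]
    rw [toDB_tvar]
    simp [vidx]
  · rw [if_neg h, lookupSub_nil, toDB_tvar]
    simp [vidx]

theorem open_toDB (A : Ty) (a c : TVar) :
    toDB (A.applySubst [(a, .tvar c)]) [] = instV (toDB A [a]) (.fvar c) 0 := by
  have hb := toDB_bridge (u := .fvar c) (F := .fvar) (fun v => ClosedAt.fvar) A [] a
  simp only [List.nil_append, dbSubst_id, List.length_nil] at hb
  rw [hb, star0]
  apply dbSubst_congr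
  intro v _
  rw [lookupSub_cons]
  by_cases h : a = v
  · rw [if_pos h, if_pos h.symm]
    rw [toDB_tvar]
    simp [vidx]
  · rw [if_neg h, if_neg (Ne.symm h), lookupSub_nil, toDB_tvar]
    simp [vidx]

theorem toDB_fvar_inv {A : Ty} {v : TVar} (h : toDB A [] = .fvar v) : A = .tvar v := by
  cases A with
  | tvar a =>
    rw [toDB_tvar] at h
    simp only [vidx] at h
    injection h with h
    rw [h]
  | con d args => rw [toDB_con] at h; exact absurd h (by simp)
  | all a A => rw [toDB_all] at h; exact absurd h (by simp)

theorem map_eq_zip {α β γ : Type _} {f : α → γ} {g : β → γ} :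
    ∀ {l₁ : List α} {l₂ : List β}, l₁.map f = l₂.map g →
      ∀ p ∈ l₁.zip l₂, f p.1 = g p.2 := by
  intro l₁
  induction l₁ with
  | nil => intro l₂ _ p hp; simp at hp
  | cons a l₁ ih =>
    intro l₂ h p hp
    cases l₂ with
    | nil => simp at hp
    | cons b l₂ =>
      simp only [List.map_cons, List.cons.injEq] at h
      rcases List.mem_cons.1 hp with hp | hp
      · rw [hp]; exact h.1
      · exact ih h.2 p hp

theorem zip_map_eq {α β γ : Type _} {f : α → γ} {g : β → γ} :
    ∀ {l₁ : List α} {l₂ : List β}, l₁.length = l₂.length →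
      (∀ p ∈ l₁.zip l₂, f p.1 = g p.2) → l₁.map f = l₂.map g := by
  intro l₁
  induction l₁ with
  | nil => intro l₂ hlen _; cases l₂ <;> simp_all
  | cons a l₁ ih =>
    intro l₂ hlen h
    cases l₂ with
    | nil => simp at hlen
    | cons b l₂ =>
      simp only [List.map_cons, List.cons.injEq]
      constructor
      · exact h (a, b) (by simp)
      · exact ih (by simpa using hlen) (fun p hp => h p (List.mem_cons_of_mem _ hp))

theorem aeq_toDB {A B : Ty} (h : Aeq A B) : toDB A [] = toDB B [] := by
  induction h with
  | var a => rfl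
  | con hlen hzip ih =>
    simp only [toDB_con, DB.con.injEq, true_and]
    exact zip_map_eq hlen ih
  | all c hcA hcB _ ih =>
    rename_i a b A B _
    simp only [toDB_all, DB.all.injEq]
    rw [← toDB_ren (a := a) hcA, ← toDB_ren (a := b) hcB]
    have e1 := toDB_abstr (A.applySubst [(a, .tvar c)]) [] c
    have e2 := toDB_abstr (B.applySubst [(b, .tvar c)]) [] c
    simp only [List.nil_append, List.length_nil] at e1 e2
    rw [e1, e2, ih]

theorem toDB_aeq : ∀ n {A B : Ty}, dbSize (toDB A []) < n → toDB A [] = toDB B [] → Aeq A B := by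
  intro n
  induction n with
  | zero => intro A B h; omega
  | succ n ih =>
    intro A B hsz h
    cases A with
    | tvar a =>
      have ht : toDB (Ty.tvar a) [] = DB.fvar a := by rw [toDB_tvar]; simp [vidx]
      have hB : B = .tvar a := toDB_fvar_inv (by rw [← h]; exact ht)
      rw [hB]
      exact Aeq.var a
    | con d args =>
      cases B with
      | tvar b =>
        rw [toDB_con, toDB_tvar] at h
        simp [vidx] at h
      | all b B => rw [toDB_con, toDB_all] at h; simp at h
      | con d' args' =>
        rw [toDB_con, toDB_con] at h
        injection h with hd hargs
        subst hd
        have hlen : args.length = args'.length := by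
          have := congrArg List.length hargs
          simpa using this
        apply Aeq.con hlen
        intro p hp
        have hp1 : p.1 ∈ args := List.of_mem_zip hp |>.1
        refine ih ?_ (map_eq_zip hargs p hp)
        have h1 : dbSize (toDB p.1 []) ≤ (args.map (fun A => dbSize (toDB A []))).sum := by
          apply List.single_le_sum (by intro y _; omega)
          exact List.mem_map.2 ⟨p.1, hp1, rfl⟩
        have h2 : dbSize (toDB (Ty.con d args) []) =
            1 + (args.map (fun A => dbSize (toDB A []))).sum := by
          simp only [toDB_con, dbSize_con, List.map_map]
          rfl
        omega
    | all a A =>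
      cases B with
      | tvar b =>
        rw [toDB_all, toDB_tvar] at h
        simp [vidx] at h
      | con d' args' => rw [toDB_all, toDB_con] at h; simp at h
      | all b B =>
        rw [toDB_all, toDB_all] at h
        injection h with hbody
        set c := freshFor (A.ftv ++ B.ftv) with hc
        have hcf := freshFor_not_mem (A.ftv ++ B.ftv)
        rw [← hc] at hcf
        simp only [List.mem_append, not_or] at hcf
        apply Aeq.all c hcf.1 hcf.2
        apply ih
        · rw [dbSize_rename]
          have : dbSize (toDB A []) = dbSize (toDB A [a]) := dbSize_toDB A [] [a]
          have h2 : dbSize (toDB (Ty.all a A) []) = 1 + dbSize (toDB A [a]) := by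
            simp [toDB_all]
          omega
        · rw [open_toDB, open_toDB, hbody]

/-! ### Kinding characterizations -/

theorem ftv_toDB_eq {X Y : Ty} (h : toDB X [] = toDB Y []) {x : TVar} :
    x ∈ X.ftv ↔ x ∈ Y.ftv := by
  rw [← mem_ftv_toDB, ← mem_ftv_toDB, h]

theorem mem_ftv_applySubst {x : TVar} {A : Ty} {θ : Subst} :
    x ∈ (A.applySubst θ).ftv ↔ ∃ v ∈ A.ftv, x ∈ (lookupSub θ v).ftv := by
  rw [← mem_ftv_toDB, star0, mem_dbFv_dbSubst]
  constructor
  · rintro ⟨v, hv, hx⟩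
    exact ⟨v, mem_ftv_toDB.1 hv, mem_ftv_toDB.1 hx⟩
  · rintro ⟨v, hv, hx⟩
    exact ⟨v, mem_ftv_toDB.2 hv, mem_ftv_toDB.2 hx⟩

theorem allFree_toDB : ∀ {A : Ty} {ctx : List TVar}, AllFree A ↔ DbAllFree (toDB A ctx) := by
  intro A
  induction A using Ty.myInduction with
  | hv a =>
    intro ctx
    rw [toDB_tvar]
    cases vidx a ctx with
    | some i => exact ⟨fun _ => DbAllFree.bvar, fun _ => AllFree.tvar⟩
    | none => exact ⟨fun _ => DbAllFree.fvar, fun _ => AllFree.tvar⟩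
  | hc d args ih =>
    intro ctx
    rw [toDB_con]
    constructor
    · intro h
      cases h with
      | con hall =>
        apply DbAllFree.con
        intro t ht
        rcases List.mem_map.1 ht with ⟨A, hA, rfl⟩
        exact (ih A hA).1 (hall A hA)
    · intro h
      cases h with
      | con hall =>
        apply AllFree.con
        intro A hA
        exact (ih A hA).2 (hall _ (List.mem_map.2 ⟨A, hA, rfl⟩))
  | ha a A _ =>
    intro ctx
    rw [toDB_all]
    constructor
    · intro h; cases h
    · intro h; cases h

theorem allFree_applySubst {A : Ty} {θ : Subst} :
    AllFree (A.applySubst θ) ↔ (AllFree A ∧ ∀ v ∈ A.ftv, AllFree (lookupSub θ v)) := by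
  rw [allFree_toDB (ctx := []), star0, dbAllFree_dbSubst]
  constructor
  · rintro ⟨h1, h2⟩
    exact ⟨allFree_toDB.2 h1, fun v hv => allFree_toDB.2 (h2 v (mem_ftv_toDB.2 hv))⟩
  · rintro ⟨h1, h2⟩
    exact ⟨allFree_toDB.1 h1, fun v hv => allFree_toDB.1 (h2 v (mem_ftv_toDB.1 hv))⟩

theorem ws_of_hasKind {E : KEnv} {A : Ty} {K : Kind} (h : HasKind E A K) :
    ∀ v ∈ A.ftv, v ∈ keysOf E := by
  induction h with
  | var hmem =>
    intro v hv
    simp at hv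
    subst hv
    exact List.mem_map.2 ⟨_, hmem, rfl⟩
  | con _ ih =>
    intro v hv
    rcases mem_ftv_con.1 hv with ⟨A, hA, hvA⟩
    exact ih A hA v hvA
  | all _ ih =>
    intro v hv
    rcases mem_ftv_all.1 hv with ⟨hvA, hva⟩
    have := ih v hvA
    simp only [keysOf, List.map_cons, List.mem_cons] at this
    rcases this with h | h
    · exact absurd h hva
    · exact h
  | up _ ih => exact ih

theorem polyKind {E : KEnv} : ∀ {A : Ty}, HasKind E A .poly ↔ ∀ v ∈ A.ftv, v ∈ keysOf E := by
  intro A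
  constructor
  · exact ws_of_hasKind
  · induction A using Ty.myInduction generalizing E with
    | hv a =>
      intro h
      have := h a (by simp)
      rcases List.mem_map.1 this with ⟨p, hp, hpa⟩
      cases hK : p.2 with
      | mono => exact HasKind.up (HasKind.var (by rw [← hpa, ← hK]; exact hp))
      | poly => exact HasKind.var (by rw [← hpa, ← hK]; exact hp)
    | hc d args ih =>
      intro h
      apply HasKind.con
      intro A hA
      exact ih A hA (fun v hv => h v (mem_ftv_con.2 ⟨A, hA, hv⟩))
    | ha a A ih =>
      intro h
      apply HasKind.all
      apply ih
      intro v hv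
      by_cases hva : v = a
      · simp [keysOf, hva]
      · have := h v (mem_ftv_all.2 ⟨hv, hva⟩)
        simp only [keysOf, List.map_cons, List.mem_cons]
        right
        exact this

theorem monoKind {E : KEnv} : ∀ {A : Ty},
    HasKind E A .mono ↔ (AllFree A ∧ ∀ v ∈ A.ftv, (v, Kind.mono) ∈ E) := by
  intro A
  constructor
  · intro h
    generalize hK : Kind.mono = K at h
    induction h with
    | var hmem =>
      subst hK
      exact ⟨AllFree.tvar, by intro v hv; simp at hv; subst hv; exact hmem⟩
    | con _ ih =>
      constructor
      · exact AllFree.con (fun A hA => (ih A hA hK).1)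
      · intro v hv
        rcases mem_ftv_con.1 hv with ⟨A, hA, hvA⟩
        exact (ih A hA hK).2 v hvA
    | all _ _ => exact absurd hK (by simp)
    | up _ _ => exact absurd hK (by simp)
  · rintro ⟨haf, hvars⟩
    induction haf with
    | tvar => exact HasKind.var (hvars _ (by simp))
    | con hall ih =>
      apply HasKind.con
      intro A hA
      exact ih A hA (fun v hv => hvars v (mem_ftv_con.2 ⟨A, hA, hv⟩))

/-! ### removeK / demote lemmas -/

theorem removeK_split : ∀ {Θ : KEnv} {a : TVar}, a ∈ keysOf Θ →
    ∃ K Θ₁ Θ₂, removeK Θ a = some (K, Θ₁ ++ Θ₂) ∧ Θ = Θ₁ ++ (a, K) :: Θ₂ := by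
  intro Θ
  induction Θ with
  | nil => intro a h; simp [keysOf] at h
  | cons p Θ ih =>
    intro a h
    by_cases hpa : p.1 = a
    · refine ⟨p.2, [], Θ, ?_, ?_⟩
      · rw [removeK, if_pos hpa]
        rfl
      · simp [← hpa]
    · have ha : a ∈ keysOf Θ := by
        simp only [keysOf, List.map_cons, List.mem_cons] at h
        rcases h with h | h
        · exact absurd h.symm hpa
        · exact h
      rcases ih ha with ⟨K, Θ₁, Θ₂, h1, h2⟩
      refine ⟨K, p :: Θ₁, Θ₂, ?_, ?_⟩
      · rw [removeK, if_neg hpa, h1]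
        rfl
      · rw [List.cons_append, ← h2]

@[simp] theorem demote_poly (Θ : KEnv) (l : List TVar) : demote .poly Θ l = Θ := rfl

theorem demote_mono_eq (Θ : KEnv) (l : List TVar) :
    demote .mono Θ l = Θ.map (fun p => if p.1 ∈ l then (p.1, Kind.mono) else p) := rfl

theorem keysOf_demote (K : Kind) (Θ : KEnv) (l : List TVar) :
    keysOf (demote K Θ l) = keysOf Θ := by
  cases K with
  | poly => rfl
  | mono =>
    rw [demote_mono_eq]
    simp only [keysOf, List.map_map]
    apply List.map_congr_left
    intro p _
    by_cases h : p.1 ∈ l <;> simp [h]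

theorem length_demote (K : Kind) (Θ : KEnv) (l : List TVar) :
    (demote K Θ l).length = Θ.length := by
  cases K with
  | poly => rfl
  | mono => rw [demote_mono_eq, List.length_map]

theorem mem_demote_iff {Θ : KEnv} {l : List TVar} {q : TVar × Kind} :
    q ∈ demote .mono Θ l ↔ ∃ p ∈ Θ, q = if p.1 ∈ l then (p.1, Kind.mono) else p := by
  rw [demote_mono_eq]
  simp only [List.mem_map]
  constructor
  · rintro ⟨p, hp, rfl⟩; exact ⟨p, hp, rfl⟩
  · rintro ⟨p, hp, rfl⟩; exact ⟨p, hp, rfl⟩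

theorem mem_demote_mono {Θ : KEnv} {l : List TVar} {v : TVar} (hv : v ∈ keysOf Θ)
    (hl : v ∈ l) : (v, Kind.mono) ∈ demote .mono Θ l := by
  rcases List.mem_map.1 hv with ⟨p, hp, rfl⟩
  exact mem_demote_iff.2 ⟨p, hp, by rw [if_pos hl]⟩

/-! ### The induction invariant and the flexible-variable case -/

theorem mem_keys_append {α β : Type _} {l₁ l₂ : List (α × β)} {v : α} :
    v ∈ keysOf (l₁ ++ l₂) ↔ v ∈ keysOf l₁ ∨ v ∈ keysOf l₂ := by
  simp [keysOf]

def Post (Δ : List TVar) (Θ Θ' Θ'' : KEnv) (θ θ' θ'' : Subst) : Prop :=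
  SubstWF Δ θ'' Θ'' Θ' ∧
  (∀ v ∈ keysOf Θ, toDB (lookupSub θ v) [] = toDB ((lookupSub θ' v).applySubst θ'') []) ∧
  (∀ p ∈ θ', p.1 ∈ keysOf Θ ∧ p.1 ∉ Δ ∧ ∀ x ∈ p.2.ftv, x ∈ Δ ∨ x ∈ keysOf Θ'') ∧
  (∀ p ∈ θ', ∀ x ∈ (p.2.applySubst θ'').ftv, ∃ w ∈ keysOf Θ, x ∈ (lookupSub θ w).ftv) ∧
  (∀ w ∈ keysOf Θ'', ∀ x ∈ (lookupSub θ'' w).ftv, ∃ v ∈ keysOf Θ, x ∈ (lookupSub θ v).ftv) ∧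
  (∀ v ∈ keysOf Θ'', v ∈ keysOf Θ) ∧
  Θ''.length ≤ Θ.length ∧
  (θ' = [] → Θ'' = Θ) ∧
  (θ' ≠ [] → Θ''.length < Θ.length) ∧
  (∀ v ∈ keysOf Θ, v ∈ keysOf Θ'' ∨ v ∈ keysOf θ')

theorem flex_main {Δ : List TVar} {Θ Θ' : KEnv} {θ : Subst} {a : TVar} {B : Ty}
    (hθ : SubstWF Δ θ Θ Θ')
    (ha : a ∈ keysOf Θ) (haΔ : a ∉ Δ)
    (hBn : B ≠ .tvar a)
    (hWB : ∀ v ∈ B.ftv, v ∈ Δ ∨ v ∈ keysOf Θ)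
    (heq : toDB (lookupSub θ a) [] = toDB (B.applySubst θ) []) :
    ∃ K Θ₀,
      removeK Θ a = some (K, Θ₀) ∧
      HasKind (dk Δ ++ demote K Θ₀ (listDiff B.ftv Δ)) B K ∧
      Post Δ Θ Θ' (demote K Θ₀ (listDiff B.ftv Δ)) θ [(a, B)] θ := by
  -- occurs check
  have haB : a ∉ B.ftv := by
    intro hmem
    have h1 : dbSize (toDB (lookupSub θ a) []) < dbSize (toDB (B.applySubst θ) []) := by
      rw [star0]
      have hfv : a ∈ dbFv (toDB B []) := mem_ftv_toDB.2 hmem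
      have hne : toDB B [] ≠ .fvar a := fun h => hBn (toDB_fvar_inv h)
      exact dbSize_lt_dbSubst (F := fun v => toDB (lookupSub θ v) []) hfv hne
    rw [heq] at h1
    omega
  rcases removeK_split ha with ⟨K, Θ₁, Θ₂, hrem, hsplit⟩
  have haK : (a, K) ∈ Θ := by rw [hsplit]; exact List.mem_append_right _ (List.mem_cons_self)
  have hKa : HasKind (dk Δ ++ Θ') (lookupSub θ a) K := hθ.1 (a, K) haK
  have memΘ₀ : ∀ p ∈ Θ₁ ++ Θ₂, p ∈ Θ := by
    intro p hp
    rw [hsplit]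
    rcases List.mem_append.1 hp with h | h
    · exact List.mem_append_left _ h
    · exact List.mem_append_right _ (List.mem_cons_of_mem _ h)
  have keysΘ₀sub : ∀ v ∈ keysOf (Θ₁ ++ Θ₂), v ∈ keysOf Θ := by
    intro v hv
    rcases List.mem_map.1 hv with ⟨p, hp, rfl⟩
    exact List.mem_map.2 ⟨p, memΘ₀ p hp, rfl⟩
  have keysΘ_ne : ∀ v ∈ keysOf Θ, v ≠ a → v ∈ keysOf (Θ₁ ++ Θ₂) := by
    intro v hv hva
    rcases List.mem_map.1 hv with ⟨p, hp, rfl⟩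
    rw [hsplit] at hp
    rcases List.mem_append.1 hp with h | h
    · exact List.mem_map.2 ⟨p, List.mem_append_left _ h, rfl⟩
    · rcases List.mem_cons.1 h with h | h
      · exact absurd (by rw [h]) hva
      · exact List.mem_map.2 ⟨p, List.mem_append_right _ h, rfl⟩
  have hkeysd : keysOf (demote K (Θ₁ ++ Θ₂) (listDiff B.ftv Δ)) = keysOf (Θ₁ ++ Θ₂) :=
    keysOf_demote _ _ _
  have hBk : ∀ v ∈ B.ftv, v ∈ Δ ∨ v ∈ keysOf (demote K (Θ₁ ++ Θ₂) (listDiff B.ftv Δ)) := by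
    intro v hv
    rcases hWB v hv with h | h
    · exact Or.inl h
    · right
      rw [hkeysd]
      exact keysΘ_ne v h (fun hva => haB (hva ▸ hv))
  have hkind : HasKind (dk Δ ++ demote K (Θ₁ ++ Θ₂) (listDiff B.ftv Δ)) B K := by
    cases K with
    | poly =>
      apply polyKind.2
      intro v hv
      rcases hBk v hv with h | h
      · exact mem_keys_append.2 (Or.inl (by rw [keysOf_dk]; exact h))
      · exact mem_keys_append.2 (Or.inr h)
    | mono =>
      rcases monoKind.1 hKa with ⟨hafθa, hvθa⟩
      have hafBθ : AllFree (B.applySubst θ) := by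
        rw [allFree_toDB (ctx := [])]
        rw [← heq]
        exact allFree_toDB.1 hafθa
      rcases allFree_applySubst.1 hafBθ with ⟨hafB, hafimg⟩
      have hvarsBθ : ∀ x ∈ (B.applySubst θ).ftv, (x, Kind.mono) ∈ dk Δ ++ Θ' := by
        intro x hx
        exact hvθa x ((ftv_toDB_eq heq).2 hx)
      apply monoKind.2
      refine ⟨hafB, ?_⟩
      intro v hv
      by_cases hvΔ : v ∈ Δ
      · exact List.mem_append.2 (Or.inl (List.mem_map.2 ⟨v, hvΔ, rfl⟩))
      · apply List.mem_append.2
        right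
        apply mem_demote_mono
        · exact keysΘ_ne v (by rcases hWB v hv with h | h; exact absurd h hvΔ; exact h)
            (fun hva => haB (hva ▸ hv))
        · exact mem_listDiff.2 ⟨hv, hvΔ⟩
  refine ⟨K, Θ₁ ++ Θ₂, hrem, hkind, ?_⟩
  have hmonoθ : K = Kind.mono →
      (∀ v ∈ B.ftv, AllFree (lookupSub θ v)) ∧
      (∀ x ∈ (B.applySubst θ).ftv, (x, Kind.mono) ∈ dk Δ ++ Θ') := by
    intro hK
    subst hK
    rcases monoKind.1 hKa with ⟨hafθa, hvθa⟩
    have hafBθ : AllFree (B.applySubst θ) := by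
      rw [allFree_toDB (ctx := [])]
      rw [← heq]
      exact allFree_toDB.1 hafθa
    exact ⟨(allFree_applySubst.1 hafBθ).2, fun x hx => hvθa x ((ftv_toDB_eq heq).2 hx)⟩
  constructor
  · -- SubstWF Δ θ Θd Θ'
    constructor
    · intro p hp
      cases K with
      | poly =>
        rw [demote_poly] at hp
        exact hθ.1 p (memΘ₀ p hp)
      | mono =>
        rcases mem_demote_iff.1 hp with ⟨q, hq, rfl⟩
        by_cases hql : q.1 ∈ listDiff B.ftv Δ
        · rw [if_pos hql]
          rcases mem_listDiff.1 hql with ⟨hqB, _⟩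
          apply monoKind.2
          refine ⟨(hmonoθ rfl).1 q.1 hqB, ?_⟩
          intro x hx
          exact (hmonoθ rfl).2 x (mem_ftv_applySubst.2 ⟨q.1, hqB, hx⟩)
        · rw [if_neg hql]
          exact hθ.1 q (memΘ₀ q hq)
    · exact hθ.2
  constructor
  · -- pointwise Deq
    intro v hv
    rw [lookupSub_cons]
    by_cases hav : a = v
    · rw [if_pos hav, ← hav]
      exact heq
    · rw [if_neg hav, lookupSub_nil, applySubst_tvar]
  constructor
  · -- R1
    intro p hp
    rcases List.mem_cons.1 hp with rfl | hp
    · exact ⟨ha, haΔ, hBk⟩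
    · simp at hp
  constructor
  · -- P
    intro p hp
    rcases List.mem_cons.1 hp with rfl | hp
    · intro x hx
      exact ⟨a, ha, (ftv_toDB_eq heq).2 hx⟩
    · simp at hp
  constructor
  · -- Q
    intro w hw x hx
    refine ⟨w, ?_, hx⟩
    rw [hkeysd] at hw
    exact keysΘ₀sub w hw
  constructor
  · -- keys subset
    intro v hv
    rw [hkeysd] at hv
    exact keysΘ₀sub v hv
  have hlen : Θ.length = (Θ₁ ++ Θ₂).length + 1 := by
    rw [hsplit]
    simp
    omega
  constructor
  · rw [length_demote]
    omega
  constructor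
  · intro h
    exact absurd h (by simp)
  constructor
  · intro _
    rw [length_demote]
    omega
  · intro v hv
    by_cases hva : v = a
    · right
      simp [keysOf, hva]
    · left
      rw [hkeysd]
      exact keysΘ_ne v hv hva

/-! ### Composition helpers -/

theorem subst_deq {σ τ : Subst} {C : Ty}
    (h : ∀ v ∈ C.ftv, toDB (lookupSub σ v) [] = toDB (lookupSub τ v) []) :
    toDB (C.applySubst σ) [] = toDB (C.applySubst τ) [] := by
  rw [star0, star0]
  exact dbSubst_congr (fun v hv => h v (mem_ftv_toDB.1 hv))

theorem comp_deq {θ σ τ : Subst} {C : Ty}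
    (h : ∀ v ∈ C.ftv, toDB (lookupSub θ v) [] = toDB ((lookupSub σ v).applySubst τ) []) :
    toDB (C.applySubst θ) [] = toDB ((C.applySubst σ).applySubst τ) [] := by
  rw [star0, star2]
  exact dbSubst_congr (fun v hv => h v (mem_ftv_toDB.1 hv))

theorem dbSize_applySubst_nil (C : Ty) :
    dbSize (toDB (C.applySubst []) []) = dbSize (toDB C []) := by
  rw [star0]
  apply dbSize_dbSubst_one
  intro v
  rw [lookupSub_nil, toDB_tvar]
  simp [vidx]

def Concl (Δ : List TVar) (Θ Θ' : KEnv) (A B : Ty) (θ : Subst) : Prop :=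
  ∃ Θ'' θ', UnifyRel Δ Θ A B Θ'' θ' ∧ ∃ θ'', Post Δ Θ Θ' Θ'' θ θ' θ''

def ConclL (Δ : List TVar) (Θ Θ' : KEnv) (As Bs : List Ty) (θ : Subst) : Prop :=
  ∃ Θ'' θ', UnifyList Δ Θ As Bs Θ'' θ' ∧ ∃ θ'', Post Δ Θ Θ' Θ'' θ θ' θ''

/-- Trivial Post for an empty output substitution. -/
theorem post_refl {Δ : List TVar} {Θ Θ' : KEnv} {θ : Subst} (hθ : SubstWF Δ θ Θ Θ') :
    Post Δ Θ Θ' Θ θ [] θ := by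
  refine ⟨hθ, ?_, ?_, ?_, ?_, ?_, le_refl _, fun _ => rfl, fun h => absurd rfl h, ?_⟩
  · intro v _
    rw [lookupSub_nil, applySubst_tvar]
  · intro p hp; simp at hp
  · intro p hp; simp at hp
  · intro w hw x hx; exact ⟨w, hw, hx⟩
  · intro v hv; exact hv
  · intro v hv; exact Or.inl hv

/-- The completeness lemma, lifted to lists of types. -/
theorem listAux :
    ∀ (n : ℕ) (As Bs : List Ty) (Δ : List TVar) (Θ Θ' : KEnv) (θ : Subst) (SB : ℕ),
    As.length < n →
    (∀ (Δ₂ : List TVar) (Θ₂ Θ₂' : KEnv) (A B : Ty) (θ₂ : Subst),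
        (Θ₂.length < Θ.length ∨ (Θ₂.length = Θ.length ∧
            dbSize (toDB A []) + dbSize (toDB B []) ≤ SB)) →
        SubstWF Δ₂ θ₂ Θ₂ Θ₂' →
        (∀ v ∈ A.ftv, v ∈ Δ₂ ∨ v ∈ keysOf Θ₂) →
        (∀ v ∈ B.ftv, v ∈ Δ₂ ∨ v ∈ keysOf Θ₂) →
        toDB (A.applySubst θ₂) [] = toDB (B.applySubst θ₂) [] →
        Concl Δ₂ Θ₂ Θ₂' A B θ₂) →
    ((As.map (fun A => dbSize (toDB A []))).sum
      + (Bs.map (fun B => dbSize (toDB B []))).sum ≤ SB) →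
    SubstWF Δ θ Θ Θ' →
    (∀ A ∈ As, ∀ v ∈ A.ftv, v ∈ Δ ∨ v ∈ keysOf Θ) →
    (∀ B ∈ Bs, ∀ v ∈ B.ftv, v ∈ Δ ∨ v ∈ keysOf Θ) →
    As.length = Bs.length →
    (∀ p ∈ As.zip Bs, toDB (p.1.applySubst θ) [] = toDB (p.2.applySubst θ) []) →
    ConclL Δ Θ Θ' As Bs θ := by
  intro n
  induction n with
  | zero => intro As Bs Δ Θ Θ' θ SB hn; omega
  | succ n ihAs =>
    intro As Bs Δ Θ Θ' θ SB hn
    cases As with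
    | nil =>
      intro _ _ hθ _ _ hlen _
      cases Bs with
      | cons B Bs => simp at hlen
      | nil => exact ⟨Θ, [], UnifyList.nil, θ, post_refl hθ⟩
    | cons A As =>
    intro HIH hsum hθ hWA hWB hlen hzip
    cases Bs with
    | nil => simp at hlen
    | cons B Bs =>
    have hn' : As.length < n := by
      simp only [List.length_cons] at hn
      omega
    simp only [List.map_cons, List.sum_cons] at hsum
    -- head unification
    rcases HIH Δ Θ Θ' A B θ (Or.inr ⟨rfl, by omega⟩) hθ
        (hWA A (List.mem_cons_self)) (hWB B (List.mem_cons_self))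
        (hzip (A, B) (by simp)) with
      ⟨ΘA, θ₁, hU1, θ''₁, ⟨W1a, W1b⟩, D1, R1, P1, Q1, S1, L1, E1, E1', C1⟩
    -- helper: keys of θ₁ are disjoint from Δ
    have hkθ₁Δ : ∀ w ∈ keysOf θ₁, w ∉ Δ := by
      intro w hw
      rcases List.mem_map.1 hw with ⟨p, hp, rfl⟩
      exact (R1 p hp).2.1
    -- helper H1 : images of θ₁ stay in scope
    have H1 : ∀ v, (v ∈ Δ ∨ v ∈ keysOf Θ) →
        ∀ x ∈ (lookupSub θ₁ v).ftv, x ∈ Δ ∨ x ∈ keysOf ΘA := by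
      intro v hv x hx
      by_cases hk : v ∈ keysOf θ₁
      · exact (R1 _ (lookupSub_mem hk)).2.2 x hx
      · rw [lookupSub_not_mem hk] at hx
        simp at hx
        subst hx
        rcases hv with h | h
        · exact Or.inl h
        · rcases C1 x h with h2 | h2
          · exact Or.inr h2
          · exact absurd h2 hk
    -- helper H2 : pointwise Deq, extended to Δ
    have H2 : ∀ v, (v ∈ Δ ∨ v ∈ keysOf Θ) →
        toDB (lookupSub θ v) [] = toDB ((lookupSub θ₁ v).applySubst θ''₁) [] := by
      intro v hv
      by_cases hk : v ∈ keysOf Θ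
      · exact D1 v hk
      · rcases hv with h | h
        · have h1 : lookupSub θ v = .tvar v := hθ.2 v h
          have h2 : lookupSub θ₁ v = .tvar v :=
            lookupSub_not_mem (fun hc => hkθ₁Δ v hc h)
          have h3 : lookupSub θ''₁ v = .tvar v := W1b v h
          rw [h1, h2, applySubst_tvar, h3]
        · exact absurd h hk
    -- helper H3 : Deq after substitution
    have H3 : ∀ C : Ty, (∀ v ∈ C.ftv, v ∈ Δ ∨ v ∈ keysOf Θ) →
        toDB (C.applySubst θ) [] = toDB ((C.applySubst θ₁).applySubst θ''₁) [] := by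
      intro C hC
      exact comp_deq (fun v hv => H2 v (hC v hv))
    -- the tail problem
    have htail : ConclL Δ ΘA Θ' (As.map (fun C => C.applySubst θ₁))
        (Bs.map (fun C => C.applySubst θ₁)) θ''₁ := by
      have hWA' : ∀ C' ∈ As.map (fun C => C.applySubst θ₁),
          ∀ v ∈ C'.ftv, v ∈ Δ ∨ v ∈ keysOf ΘA := by
        intro C' hC' x hx
        rcases List.mem_map.1 hC' with ⟨C, hC, rfl⟩
        rcases mem_ftv_applySubst.1 hx with ⟨v, hvC, hxv⟩
        exact H1 v (hWA C (List.mem_cons_of_mem _ hC) v hvC) x hxv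
      have hWB' : ∀ C' ∈ Bs.map (fun C => C.applySubst θ₁),
          ∀ v ∈ C'.ftv, v ∈ Δ ∨ v ∈ keysOf ΘA := by
        intro C' hC' x hx
        rcases List.mem_map.1 hC' with ⟨C, hC, rfl⟩
        rcases mem_ftv_applySubst.1 hx with ⟨v, hvC, hxv⟩
        exact H1 v (hWB C (List.mem_cons_of_mem _ hC) v hvC) x hxv
      have hlen' : (As.map (fun C => C.applySubst θ₁)).length
          = (Bs.map (fun C => C.applySubst θ₁)).length := by
        simp only [List.length_map]
        simpa using hlen
      have hzip' : ∀ p ∈ (As.map (fun C => C.applySubst θ₁)).zip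
            (Bs.map (fun C => C.applySubst θ₁)),
          toDB (p.1.applySubst θ''₁) [] = toDB (p.2.applySubst θ''₁) [] := by
        intro p hp
        rw [List.zip_map] at hp
        rcases List.mem_map.1 hp with ⟨⟨C, D⟩, hCD, rfl⟩
        have hC : C ∈ As := (List.of_mem_zip hCD).1
        have hD : D ∈ Bs := (List.of_mem_zip hCD).2
        calc toDB ((C.applySubst θ₁).applySubst θ''₁) []
            = toDB (C.applySubst θ) [] :=
              (H3 C (hWA C (List.mem_cons_of_mem _ hC))).symm
          _ = toDB (D.applySubst θ) [] := hzip (C, D) (List.mem_cons_of_mem _ hCD)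
          _ = toDB ((D.applySubst θ₁).applySubst θ''₁) [] :=
              H3 D (hWB D (List.mem_cons_of_mem _ hD))
      by_cases hθ₁nil : θ₁ = []
      · -- environment unchanged; sizes unchanged
        have hΘA : ΘA = Θ := E1 hθ₁nil
        subst hΘA
        subst hθ₁nil
        apply ihAs _ _ Δ ΘA Θ' θ''₁ SB (by simpa using hn') HIH _ ⟨W1a, W1b⟩ hWA' hWB' hlen' hzip'
        have e1 : (As.map (fun C => C.applySubst ([] : Subst))).map
            (fun A => dbSize (toDB A [])) = As.map (fun A => dbSize (toDB A [])) := by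
          rw [List.map_map]
          apply List.map_congr_left
          intro C _
          exact dbSize_applySubst_nil C
        have e2 : (Bs.map (fun C => C.applySubst ([] : Subst))).map
            (fun A => dbSize (toDB A [])) = Bs.map (fun A => dbSize (toDB A [])) := by
          rw [List.map_map]
          apply List.map_congr_left
          intro C _
          exact dbSize_applySubst_nil C
        rw [e1, e2]
        have h1 := dbSize_pos (toDB A [])
        have h2 := dbSize_pos (toDB B [])
        omega
      · -- environment strictly smaller
        have hlt : ΘA.length < Θ.length := E1' hθ₁nil
        apply ihAs _ _ Δ ΘA Θ' θ''₁
          (((As.map (fun C => C.applySubst θ₁)).map (fun A => dbSize (toDB A []))).sum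
            + ((Bs.map (fun C => C.applySubst θ₁)).map (fun A => dbSize (toDB A []))).sum)
          (by simpa using hn')
          (fun Δ₂ Θ₂ Θ₂' A' B' θ₂ h => HIH Δ₂ Θ₂ Θ₂' A' B' θ₂ (by
            rcases h with h | h
            · exact Or.inl (by omega)
            · exact Or.inl (by omega)))
          (by omega) ⟨W1a, W1b⟩ hWA' hWB' hlen' hzip'
    rcases htail with ⟨ΘB, θ₂, hU2, θ''₂, ⟨W2a, W2b⟩, D2, R2, P2, Q2, S2, L2, E2, E2', C2⟩
    -- level-2 helpers
    have hkθ₂Δ : ∀ w ∈ keysOf θ₂, w ∉ Δ := by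
      intro w hw
      rcases List.mem_map.1 hw with ⟨p, hp, rfl⟩
      exact (R2 p hp).2.1
    have H1b : ∀ v, (v ∈ Δ ∨ v ∈ keysOf ΘA) →
        ∀ x ∈ (lookupSub θ₂ v).ftv, x ∈ Δ ∨ x ∈ keysOf ΘB := by
      intro v hv x hx
      by_cases hk : v ∈ keysOf θ₂
      · exact (R2 _ (lookupSub_mem hk)).2.2 x hx
      · rw [lookupSub_not_mem hk] at hx
        simp at hx
        subst hx
        rcases hv with h | h
        · exact Or.inl h
        · rcases C2 x h with h2 | h2
          · exact Or.inr h2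
          · exact absurd h2 hk
    have H2b : ∀ v, (v ∈ Δ ∨ v ∈ keysOf ΘA) →
        toDB (lookupSub θ''₁ v) [] = toDB ((lookupSub θ₂ v).applySubst θ''₂) [] := by
      intro v hv
      by_cases hk : v ∈ keysOf ΘA
      · exact D2 v hk
      · rcases hv with h | h
        · have h1 : lookupSub θ''₁ v = .tvar v := W1b v h
          have h2 : lookupSub θ₂ v = .tvar v :=
            lookupSub_not_mem (fun hc => hkθ₂Δ v hc h)
          have h3 : lookupSub θ''₂ v = .tvar v := W2b v h
          rw [h1, h2, applySubst_tvar, h3]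
        · exact absurd h hk
    -- scope of values of θ₁
    have hftvθ₁ : ∀ v, (v ∈ Δ ∨ v ∈ keysOf Θ) →
        ∀ x ∈ (lookupSub θ₁ v).ftv, x ∈ Δ ∨ x ∈ keysOf ΘA := H1
    refine ⟨ΘB, compSubst θ₂ θ₁, UnifyList.cons hU1 hU2, θ''₂, ⟨W2a, W2b⟩, ?_, ?_, ?_, ?_, ?_, ?_, ?_, ?_, ?_⟩
    · -- pointwise Deq
      intro v hv
      rw [lookup_compSubst]
      calc toDB (lookupSub θ v) []
          = toDB ((lookupSub θ₁ v).applySubst θ''₁) [] := D1 v hv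
        _ = toDB (((lookupSub θ₁ v).applySubst θ₂).applySubst θ''₂) [] := by
            apply comp_deq
            intro w hw
            exact H2b w (hftvθ₁ v (Or.inr hv) w hw)
    · -- R1
      intro p hp
      rcases List.mem_append.1 hp with hp | hp
      · rcases List.mem_map.1 hp with ⟨q, hq, rfl⟩
        refine ⟨(R1 q hq).1, (R1 q hq).2.1, ?_⟩
        intro x hx
        rcases mem_ftv_applySubst.1 hx with ⟨v, hvq, hxv⟩
        exact H1b v ((R1 q hq).2.2 v hvq) x hxv
      · refine ⟨S1 p.1 (R2 p hp).1, (R2 p hp).2.1, (R2 p hp).2.2⟩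
    · -- P
      intro p hp
      rcases List.mem_append.1 hp with hp | hp
      · rcases List.mem_map.1 hp with ⟨q, hq, rfl⟩
        intro x hx
        have hdq : toDB (q.2.applySubst θ''₁) []
            = toDB ((q.2.applySubst θ₂).applySubst θ''₂) [] := by
          apply comp_deq
          intro w hw
          exact H2b w ((R1 q hq).2.2 w hw)
        have hx' : x ∈ (q.2.applySubst θ''₁).ftv := (ftv_toDB_eq hdq).2 hx
        exact P1 q hq x hx'
      · intro x hx
        rcases P2 p hp x hx with ⟨w, hw, hxw⟩
        exact Q1 w hw x hxw
    · -- Q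
      intro w hw x hx
      rcases Q2 w hw x hx with ⟨v, hv, hxv⟩
      exact Q1 v hv x hxv
    · -- keys subset
      intro v hv
      exact S1 v (S2 v hv)
    · -- length
      omega
    · -- empty case
      intro h
      have h2 : θ₁.map (fun p => (p.1, p.2.applySubst θ₂)) ++ θ₂ = [] := h
      rcases List.append_eq_nil_iff.1 h2 with ⟨hm, h2nil⟩
      have h1nil : θ₁ = [] := List.map_eq_nil_iff.1 hm
      rw [E2 h2nil, E1 h1nil]
    · -- nonempty case
      intro hne
      by_cases hθ₁nil : θ₁ = []
      · have hΘA := E1 hθ₁nil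
        have hθ₂ne : θ₂ ≠ [] := by
          intro h2
          apply hne
          simp [compSubst, hθ₁nil, h2]
        have := E2' hθ₂ne
        have hl := congrArg List.length hΘA
        omega
      · have := E1' hθ₁nil
        omega
    · -- coverage
      intro v hv
      rcases C1 v hv with h | h
      · rcases C2 v h with h2 | h2
        · exact Or.inl h2
        · right
          rw [keysOf_compSubst]
          exact List.mem_append_right _ h2
      · right
        rw [keysOf_compSubst]
        exact List.mem_append_left _ h

/-! ### Assorted small lemmas for the main induction -/

theorem hasKind_cons_weaken {E : KEnv} {X : Ty} {K : Kind} (q : TVar × Kind)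
    (h : HasKind E X K) : HasKind (q :: E) X K := by
  cases K with
  | poly =>
    apply polyKind.2
    intro v hv
    exact List.mem_cons_of_mem _ (ws_of_hasKind h v hv)
  | mono =>
    rcases monoKind.1 h with ⟨haf, hvars⟩
    exact monoKind.2 ⟨haf, fun v hv => List.mem_cons_of_mem _ (hvars v hv)⟩

theorem sz_con (d : ℕ) (args : List Ty) :
    dbSize (toDB (Ty.con d args) []) = 1 + (args.map (fun A => dbSize (toDB A []))).sum := by
  rw [toDB_con, dbSize_con, List.map_map]
  rfl

theorem ftv_con_nil (d : ℕ) : (Ty.con d []).ftv = [] := by simp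

theorem conEmpty_hasKind {E : KEnv} {K : Kind} : HasKind E (Ty.con 0 []) K :=
  HasKind.con (by intro A hA; simp at hA)

/-! ### The main completeness induction -/

theorem mainAux : ∀ (N M : ℕ) (Δ : List TVar) (Θ Θ' : KEnv) (A B : Ty) (θ : Subst),
    Θ.length < N → dbSize (toDB A []) + dbSize (toDB B []) < M →
    SubstWF Δ θ Θ Θ' →
    (∀ v ∈ A.ftv, v ∈ Δ ∨ v ∈ keysOf Θ) →
    (∀ v ∈ B.ftv, v ∈ Δ ∨ v ∈ keysOf Θ) →
    toDB (A.applySubst θ) [] = toDB (B.applySubst θ) [] →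
    Concl Δ Θ Θ' A B θ := by
  intro N
  induction N using Nat.strong_induction_on with
  | _ N IHN =>
  intro M
  induction M using Nat.strong_induction_on with
  | _ M IHM =>
  intro Δ Θ Θ' A B θ hN hM hθ hWA hWB heq
  -- the combined induction hypothesis
  have IHfull : ∀ (Δ₂ : List TVar) (Θ₂ Θ₂' : KEnv) (A' B' : Ty) (θ₂ : Subst),
      (Θ₂.length < Θ.length ∨ (Θ₂.length = Θ.length ∧
          dbSize (toDB A' []) + dbSize (toDB B' []) < dbSize (toDB A []) + dbSize (toDB B []))) →
      SubstWF Δ₂ θ₂ Θ₂ Θ₂' →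
      (∀ v ∈ A'.ftv, v ∈ Δ₂ ∨ v ∈ keysOf Θ₂) →
      (∀ v ∈ B'.ftv, v ∈ Δ₂ ∨ v ∈ keysOf Θ₂) →
      toDB (A'.applySubst θ₂) [] = toDB (B'.applySubst θ₂) [] →
      Concl Δ₂ Θ₂ Θ₂' A' B' θ₂ := by
    intro Δ₂ Θ₂ Θ₂' A' B' θ₂ h
    rcases h with h | ⟨hlen, hsz⟩
    · exact IHN Θ.length hN (dbSize (toDB A' []) + dbSize (toDB B' []) + 1)
        Δ₂ Θ₂ Θ₂' A' B' θ₂ h (by omega)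
    · exact IHM (dbSize (toDB A []) + dbSize (toDB B [])) hM
        Δ₂ Θ₂ Θ₂' A' B' θ₂ (by omega) (by omega)
  clear IHN IHM
  cases A with
  | tvar a =>
    by_cases hBa : B = .tvar a
    · subst hBa
      exact ⟨Θ, [], UnifyRel.refl, θ, post_refl hθ⟩
    · by_cases haΔ : a ∈ Δ
      · -- the other side must be a flexible variable
        have hθa : lookupSub θ a = .tvar a := hθ.2 a haΔ
        have heq' : toDB (B.applySubst θ) [] = .fvar a := by
          rw [← heq, applySubst_tvar, hθa, toDB_tvar]
          simp [vidx]
        have hBθ : B.applySubst θ = .tvar a := toDB_fvar_inv heq'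
        cases B with
        | con d args => rw [applySubst_con] at hBθ; exact absurd hBθ (by simp)
        | all b B0 => rw [applySubst_all] at hBθ; exact absurd hBθ (by simp)
        | tvar b =>
          have hba : b ≠ a := fun h => hBa (by rw [h])
          have hlkb : lookupSub θ b = .tvar a := by
            rw [applySubst_tvar] at hBθ
            exact hBθ
          have hbΔ : b ∉ Δ := by
            intro hbΔ
            have h2 := hθ.2 b hbΔ
            rw [h2] at hlkb
            injection hlkb with h3
            exact hba h3
          have hbΘ : b ∈ keysOf Θ := by
            rcases hWB b (by simp) with h | h
            · exact absurd h hbΔ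
            · exact h
          have hne : Ty.tvar a ≠ Ty.tvar b := by
            intro h
            injection h with h
            exact hba h.symm
          have heqb : toDB (lookupSub θ b) [] = toDB ((Ty.tvar a).applySubst θ) [] := by
            rw [applySubst_tvar, hθa, hlkb]
          have hWtb : ∀ v ∈ (Ty.tvar a).ftv, v ∈ Δ ∨ v ∈ keysOf Θ := by
            intro v hv
            simp at hv
            subst hv
            exact Or.inl haΔ
          rcases flex_main hθ hbΘ hbΔ hne hWtb heqb with ⟨K, Θ₀, hrem, hkind, hpost⟩
          exact ⟨_, _, UnifyRel.flexR hne hrem rfl hkind, θ, hpost⟩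
      · have haΘ : a ∈ keysOf Θ := by
          rcases hWA a (by simp) with h | h
          · exact absurd h haΔ
          · exact h
        have heqa : toDB (lookupSub θ a) [] = toDB (B.applySubst θ) [] := by
          rw [← heq, applySubst_tvar]
        rcases flex_main hθ haΘ haΔ hBa hWB heqa with ⟨K, Θ₀, hrem, hkind, hpost⟩
        exact ⟨_, _, UnifyRel.flexL hBa hrem rfl hkind, θ, hpost⟩
  | con d args =>
    cases B with
    | tvar b =>
      have hne : Ty.con d args ≠ Ty.tvar b := by simp
      by_cases hbΔ : b ∈ Δ
      · exfalso
        have hθb : lookupSub θ b = .tvar b := hθ.2 b hbΔ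
        have heq' : toDB ((Ty.con d args).applySubst θ) [] = .fvar b := by
          rw [heq, applySubst_tvar, hθb, toDB_tvar]
          simp [vidx]
        have h2 : (Ty.con d args).applySubst θ = .tvar b := toDB_fvar_inv heq'
        rw [applySubst_con] at h2
        exact absurd h2 (by simp)
      · have hbΘ : b ∈ keysOf Θ := by
          rcases hWB b (by simp) with h | h
          · exact absurd h hbΔ
          · exact h
        have heqb : toDB (lookupSub θ b) []
            = toDB ((Ty.con d args).applySubst θ) [] := by
          rw [heq, applySubst_tvar]
        rcases flex_main hθ hbΘ hbΔ hne hWA heqb with ⟨K, Θ₀, hrem, hkind, hpost⟩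
        exact ⟨_, _, UnifyRel.flexR hne hrem rfl hkind, θ, hpost⟩
    | all b B0 =>
      exfalso
      rw [applySubst_con, applySubst_all, toDB_con, toDB_all] at heq
      exact absurd heq (by simp)
    | con d' args' =>
      rw [applySubst_con, applySubst_con, toDB_con, toDB_con] at heq
      injection heq with hd hargs
      subst hd
      rw [List.map_map, List.map_map] at hargs
      have hlen : args.length = args'.length := by
        have := congrArg List.length hargs
        simpa using this
      have hzip : ∀ p ∈ args.zip args',
          toDB (p.1.applySubst θ) [] = toDB (p.2.applySubst θ) [] :=
        map_eq_zip hargs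
      have hszA := sz_con d args
      have hszB := sz_con d args'
      rcases listAux (args.length + 1) args args' Δ Θ Θ' θ
          ((args.map (fun A => dbSize (toDB A []))).sum
            + (args'.map (fun A => dbSize (toDB A []))).sum)
          (by omega)
          (fun Δ₂ Θ₂ Θ₂' A' B' θ₂ h hw hA hB he =>
            IHfull Δ₂ Θ₂ Θ₂' A' B' θ₂ (by
              rcases h with h | ⟨h1, h2⟩
              · exact Or.inl h
              · exact Or.inr ⟨h1, by omega⟩) hw hA hB he)
          (le_refl _) hθ
          (fun C hC v hv => hWA v (mem_ftv_con.2 ⟨C, hC, hv⟩))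
          (fun C hC v hv => hWB v (mem_ftv_con.2 ⟨C, hC, hv⟩))
          hlen hzip with ⟨Θ'', θ', hUL, θ'', hpost⟩
      exact ⟨Θ'', θ', UnifyRel.con hUL, θ'', hpost⟩
  | all a A0 =>
    cases B with
    | tvar b =>
      have hne : Ty.all a A0 ≠ Ty.tvar b := by simp
      by_cases hbΔ : b ∈ Δ
      · exfalso
        have hθb : lookupSub θ b = .tvar b := hθ.2 b hbΔ
        have heq' : toDB ((Ty.all a A0).applySubst θ) [] = .fvar b := by
          rw [heq, applySubst_tvar, hθb, toDB_tvar]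
          simp [vidx]
        have h2 : (Ty.all a A0).applySubst θ = .tvar b := toDB_fvar_inv heq'
        rw [applySubst_all] at h2
        exact absurd h2 (by simp)
      · have hbΘ : b ∈ keysOf Θ := by
          rcases hWB b (by simp) with h | h
          · exact absurd h hbΔ
          · exact h
        have heqb : toDB (lookupSub θ b) []
            = toDB ((Ty.all a A0).applySubst θ) [] := by
          rw [heq, applySubst_tvar]
        rcases flex_main hθ hbΘ hbΔ hne hWA heqb with ⟨K, Θ₀, hrem, hkind, hpost⟩
        exact ⟨_, _, UnifyRel.flexR hne hrem rfl hkind, θ, hpost⟩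
    | con d' args' =>
      exfalso
      rw [applySubst_con, applySubst_all, toDB_con, toDB_all] at heq
      exact absurd heq (by simp)
    | all b B0 =>
      -- choose a fresh skolem constant
      obtain ⟨c, hcΔ, hcΘ, hcθk, hcθf, hcA, hcB, hca, hcb, hcΘ'⟩ :
          ∃ c : TVar, c ∉ Δ ∧ c ∉ keysOf Θ ∧ c ∉ keysOf θ ∧ c ∉ ftvSubst θ ∧
            c ∉ A0.ftv ∧ c ∉ B0.ftv ∧ c ≠ a ∧ c ≠ b ∧ c ∉ keysOf Θ' := by
        set L := Δ ++ keysOf Θ ++ keysOf θ ++ ftvSubst θ ++ A0.ftv ++ B0.ftv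
            ++ a :: b :: keysOf Θ' with hLdef
        refine ⟨freshFor L, ?_, ?_, ?_, ?_, ?_, ?_, ?_, ?_, ?_⟩ <;>
          (intro h; exact freshFor_not_mem L
            (by rw [hLdef]; simp only [List.mem_append, List.mem_cons]; tauto))
      have hθc : lookupSub θ c = .tvar c := lookupSub_not_mem hcθk
      have hθ' : SubstWF (c :: Δ) θ Θ Θ' := by
        constructor
        · intro p hp
          exact hasKind_cons_weaken _ (hθ.1 p hp)
        · intro x hx
          rcases List.mem_cons.1 hx with h | h
          · rw [h]; exact hθc
          · exact hθ.2 x h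
      have hWA0 : ∀ v ∈ (A0.applySubst [(a, .tvar c)]).ftv,
          v ∈ (c :: Δ) ∨ v ∈ keysOf Θ := by
        intro v hv
        rcases mem_ftv_applySubst.1 hv with ⟨w, hwA, hvw⟩
        rw [lookupSub_cons] at hvw
        by_cases haw : a = w
        · rw [if_pos haw] at hvw
          simp at hvw
          subst hvw
          exact Or.inl (List.mem_cons_self)
        · rw [if_neg haw, lookupSub_nil] at hvw
          simp at hvw
          subst hvw
          rcases hWA v (mem_ftv_all.2 ⟨hwA, fun h => haw h.symm⟩) with h | h
          · exact Or.inl (List.mem_cons_of_mem _ h)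
          · exact Or.inr h
      have hWB0 : ∀ v ∈ (B0.applySubst [(b, .tvar c)]).ftv,
          v ∈ (c :: Δ) ∨ v ∈ keysOf Θ := by
        intro v hv
        rcases mem_ftv_applySubst.1 hv with ⟨w, hwA, hvw⟩
        rw [lookupSub_cons] at hvw
        by_cases haw : b = w
        · rw [if_pos haw] at hvw
          simp at hvw
          subst hvw
          exact Or.inl (List.mem_cons_self)
        · rw [if_neg haw, lookupSub_nil] at hvw
          simp at hvw
          subst hvw
          rcases hWB v (mem_ftv_all.2 ⟨hwA, fun h => haw h.symm⟩) with h | h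
          · exact Or.inl (List.mem_cons_of_mem _ h)
          · exact Or.inr h
      -- Deq of the opened bodies
      have heqbody : dbSubst (toDB A0 [a]) (fun v => toDB (lookupSub θ v) [])
          = dbSubst (toDB B0 [b]) (fun v => toDB (lookupSub θ v) []) := by
        have h1 := star0 (Ty.all a A0) θ
        have h2 := star0 (Ty.all b B0) θ
        rw [h1, h2, toDB_all, toDB_all, dbSubst_all, dbSubst_all] at heq
        injection heq
      have hren : ∀ (X : Ty) (x : TVar),
          toDB ((X.applySubst [(x, .tvar c)]).applySubst θ) []
            = instV (dbSubst (toDB X [x]) (fun v => toDB (lookupSub θ v) [])) (.fvar c) 0 := by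
        intro X x
        have hb := toDB_bridge (u := DB.fvar c) (F := fun v => toDB (lookupSub θ v) [])
          (fun v => by simpa using closedAt_toDB (lookupSub θ v) []) X [] x
        simp only [List.nil_append, List.length_nil] at hb
        rw [star2, hb]
        apply dbSubst_congr
        intro v _
        by_cases hvx : v = x
        · rw [if_pos hvx, hvx, lookupSub_cons, if_pos rfl, applySubst_tvar, hθc, toDB_tvar]
          simp [vidx]
        · rw [if_neg hvx, lookupSub_cons, if_neg (fun h => hvx h.symm), lookupSub_nil,
            applySubst_tvar]
      have heqIH : toDB ((A0.applySubst [(a, .tvar c)]).applySubst θ) []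
          = toDB ((B0.applySubst [(b, .tvar c)]).applySubst θ) [] := by
        rw [hren A0 a, hren B0 b, heqbody]
      have hszA : dbSize (toDB (A0.applySubst [(a, .tvar c)]) []) = dbSize (toDB A0 []) :=
        dbSize_rename A0 a c
      have hszB : dbSize (toDB (B0.applySubst [(b, .tvar c)]) []) = dbSize (toDB B0 []) :=
        dbSize_rename B0 b c
      have hszA2 : dbSize (toDB (Ty.all a A0) []) = 1 + dbSize (toDB A0 []) := by
        rw [toDB_all, dbSize_all, dbSize_toDB A0 [a] []]
      have hszB2 : dbSize (toDB (Ty.all b B0) []) = 1 + dbSize (toDB B0 []) := by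
        rw [toDB_all, dbSize_all, dbSize_toDB B0 [b] []]
      rcases IHfull (c :: Δ) Θ Θ' (A0.applySubst [(a, .tvar c)]) (B0.applySubst [(b, .tvar c)])
          θ (Or.inr ⟨rfl, by omega⟩) hθ' hWA0 hWB0 heqIH with
        ⟨Θ'', θ', hU, θ''ih, ⟨Wa, Wb⟩, Dih, R1ih, Pih, Qih, S1ih, L1ih, E1ih, E1'ih, C1ih⟩
      -- facts about c
      have hθc'' : lookupSub θ''ih c = .tvar c := Wb c (List.mem_cons_self)
      have hftvθ : ∀ w ∈ keysOf Θ, c ∉ (lookupSub θ w).ftv := by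
        intro w hw hmem
        by_cases hk : w ∈ keysOf θ
        · exact hcθf (ftv_lookupSub_subset hk c hmem)
        · rw [lookupSub_not_mem hk] at hmem
          simp at hmem
          exact hcΘ (hmem ▸ hw)
      have hesc : c ∉ ftvSubst θ' := by
        intro hmem
        rcases mem_ftvSubst.1 hmem with ⟨p, hp, hcp⟩
        have hc2 : c ∈ (p.2.applySubst θ''ih).ftv :=
          mem_ftv_applySubst.2 ⟨c, hcp, by rw [hθc'']; simp⟩
        rcases Pih p hp c hc2 with ⟨w, hw, hcw⟩
        exact hftvθ w hw hcw
      have hentc : ∀ p ∈ θ', c ∉ p.2.ftv :=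
        fun p hp hmem => hesc (mem_ftvSubst.2 ⟨p, hp, hmem⟩)
      have hlkc : ∀ w ∈ keysOf Θ, c ∉ (lookupSub θ' w).ftv := by
        intro w hw hmem
        by_cases hk : w ∈ keysOf θ'
        · exact hentc _ (lookupSub_mem hk) hmem
        · rw [lookupSub_not_mem hk] at hmem
          simp at hmem
          exact hcΘ (hmem ▸ hw)
      have hq''c : ∀ w ∈ keysOf Θ'', c ∉ (lookupSub θ''ih w).ftv := by
        intro w hw hmem
        rcases Qih w hw c hmem with ⟨v, hv, hcv⟩
        exact hftvθ v hv hcv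
      have hΔ''c : ∀ w ∈ Δ, c ∉ (lookupSub θ''ih w).ftv := by
        intro w hw hmem
        rw [Wb w (List.mem_cons_of_mem _ hw)] at hmem
        simp at hmem
        exact hcΔ (hmem ▸ hw)
      -- the cleanup substitution
      have hfin_eq : ∀ v, c ∉ (lookupSub θ''ih v).ftv →
          toDB (lookupSub (compSubst [(c, Ty.con 0 [])] θ''ih) v) []
            = toDB (lookupSub θ''ih v) [] := by
        intro v hv
        rw [lookup_compSubst, star0]
        apply (dbSubst_congr ?_).trans (dbSubst_id _)
        intro w hw
        have hwc : w ≠ c := fun h => hv (h ▸ mem_ftv_toDB.1 hw)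
        rw [lookupSub_cons, if_neg (fun h => hwc h.symm), lookupSub_nil, toDB_tvar]
        simp [vidx]
      refine ⟨Θ'', θ', UnifyRel.all c hcΔ hcΘ ?_ ?_ hU hesc,
        compSubst [(c, Ty.con 0 [])] θ''ih, ?_, ?_, ?_, ?_, ?_, S1ih, L1ih, E1ih, E1'ih, C1ih⟩
      · intro h
        exact hcA (mem_ftv_all.1 h).1
      · intro h
        exact hcB (mem_ftv_all.1 h).1
      · -- SubstWF
        constructor
        · intro p hp
          have h0 : HasKind (dk (c :: Δ) ++ Θ') (lookupSub θ''ih p.1) p.2 := Wa p hp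
          rw [lookup_compSubst]
          have hdk : dk (c :: Δ) ++ Θ' = (c, Kind.mono) :: (dk Δ ++ Θ') := rfl
          cases hK : p.2 with
          | poly =>
            apply polyKind.2
            intro x hx
            rcases mem_ftv_applySubst.1 hx with ⟨v, hvI, hxv⟩
            rw [lookupSub_cons] at hxv
            by_cases hvc : c = v
            · rw [if_pos hvc] at hxv
              simp at hxv
            · rw [if_neg hvc, lookupSub_nil] at hxv
              simp at hxv
              subst hxv
              have h2 := ws_of_hasKind (hK ▸ h0) x hvI
              rw [hdk] at h2
              rcases List.mem_cons.1 h2 with h3 | h3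
              · exact absurd h3.symm hvc
              · exact h3
          | mono =>
            rcases monoKind.1 (hK ▸ h0) with ⟨haf, hvars⟩
            apply monoKind.2
            constructor
            · apply allFree_applySubst.2
              refine ⟨haf, ?_⟩
              intro v _
              rw [lookupSub_cons]
              by_cases hvc : c = v
              · rw [if_pos hvc]
                exact AllFree.con (by intro A hA; simp at hA)
              · rw [if_neg hvc, lookupSub_nil]
                exact AllFree.tvar
            · intro x hx
              rcases mem_ftv_applySubst.1 hx with ⟨v, hvI, hxv⟩
              rw [lookupSub_cons] at hxv
              by_cases hvc : c = v
              · rw [if_pos hvc] at hxv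
                simp at hxv
              · rw [if_neg hvc, lookupSub_nil] at hxv
                simp at hxv
                subst hxv
                have h2 := hvars x hvI
                rw [hdk] at h2
                rcases List.mem_cons.1 h2 with h3 | h3
                · exfalso
                  injection h3 with h4 _
                  exact hvc h4.symm
                · exact h3
        · intro x hx
          rw [lookup_compSubst, Wb x (List.mem_cons_of_mem _ hx), applySubst_tvar,
            lookupSub_cons, if_neg (fun h : c = x => hcΔ (h ▸ hx)), lookupSub_nil]
      · -- pointwise Deq
        intro v hv
        have hw_c : ∀ w ∈ (lookupSub θ' v).ftv, c ∉ (lookupSub θ''ih w).ftv := by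
          intro w hw
          by_cases hk : v ∈ keysOf θ'
          · rcases (R1ih _ (lookupSub_mem hk)).2.2 w hw with hwΔ | hwΘ
            · rcases List.mem_cons.1 hwΔ with h | h
              · exact absurd (h ▸ hw) (hlkc v hv)
              · exact hΔ''c w h
            · exact hq''c w hwΘ
          · rw [lookupSub_not_mem hk] at hw
            simp at hw
            subst hw
            intro hmem
            apply hftvθ w hv
            apply (ftv_toDB_eq (Dih w hv)).2
            rw [lookupSub_not_mem hk, applySubst_tvar]
            exact hmem
        calc toDB (lookupSub θ v) []
            = toDB ((lookupSub θ' v).applySubst θ''ih) [] := Dih v hv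
          _ = toDB ((lookupSub θ' v).applySubst (compSubst [(c, Ty.con 0 [])] θ''ih)) [] := by
              apply subst_deq
              intro w hw
              exact (hfin_eq w (hw_c w hw)).symm
      · -- R1
        intro p hp
        refine ⟨(R1ih p hp).1, fun h => (R1ih p hp).2.1 (List.mem_cons_of_mem _ h), ?_⟩
        intro x hx
        rcases (R1ih p hp).2.2 x hx with h | h
        · rcases List.mem_cons.1 h with h2 | h2
          · exact absurd (h2 ▸ hx) (hentc p hp)
          · exact Or.inl h2
        · exact Or.inr h
      · -- P
        intro p hp x hx
        have hdq : toDB (p.2.applySubst (compSubst [(c, Ty.con 0 [])] θ''ih)) []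
            = toDB (p.2.applySubst θ''ih) [] := by
          apply subst_deq
          intro w hw
          apply hfin_eq
          rcases (R1ih p hp).2.2 w hw with h | h
          · rcases List.mem_cons.1 h with h2 | h2
            · exact absurd (h2 ▸ hw) (hentc p hp)
            · exact hΔ''c w h2
          · exact hq''c w h
        exact Pih p hp x ((ftv_toDB_eq hdq).1 hx)
      · -- Q
        intro w hw x hx
        rw [lookup_compSubst] at hx
        rcases mem_ftv_applySubst.1 hx with ⟨v, hvth, hxv⟩
        rw [lookupSub_cons] at hxv
        by_cases hvc : c = v
        · rw [if_pos hvc] at hxv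
          simp at hxv
        · rw [if_neg hvc, lookupSub_nil] at hxv
          simp at hxv
          subst hxv
          exact Qih w hw x hvth

/-- completeness and most-generality of unification. -/
theorem unify_complete {Δ : List TVar} {Θ Θ' : KEnv} {A B : Ty} {K : Kind} {θ : Subst}
    (hθ : SubstWF Δ θ Θ Θ')
    (hA : HasKind (dk Δ ++ Θ) A K) (hB : HasKind (dk Δ ++ Θ) B K)
    (heq : Aeq (A.applySubst θ) (B.applySubst θ)) :
    ∃ Θ'' θ', UnifyRel Δ Θ A B Θ'' θ' ∧
      ∃ θ'', SubstWF Δ θ'' Θ'' Θ' ∧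
        ∀ a ∈ Θ.map Prod.fst,
          Aeq (lookupSub θ a) ((lookupSub θ' a).applySubst θ'') := by
  have hWA : ∀ v ∈ A.ftv, v ∈ Δ ∨ v ∈ keysOf Θ := by
    intro v hv
    rcases mem_keys_append.1 (ws_of_hasKind hA v hv) with h | h
    · left; rwa [keysOf_dk] at h
    · right; exact h
  have hWB : ∀ v ∈ B.ftv, v ∈ Δ ∨ v ∈ keysOf Θ := by
    intro v hv
    rcases mem_keys_append.1 (ws_of_hasKind hB v hv) with h | h
    · left; rwa [keysOf_dk] at h
    · right; exact h
  have heqD := aeq_toDB heq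
  rcases mainAux (Θ.length + 1) (dbSize (toDB A []) + dbSize (toDB B []) + 1) Δ Θ Θ' A B θ
      (by omega) (by omega) hθ hWA hWB heqD with
    ⟨Θ'', θ', hU, θ'', hW, hD, _⟩
  refine ⟨Θ'', θ', hU, θ'', hW, ?_⟩
  intro a ha
  exact toDB_aeq (dbSize (toDB (lookupSub θ a) []) + 1) (by omega) (hD a ha)

end FreezeML
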